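/- arXiv:2307.13830 — 3 statements merged into one kernel-verified Lean document; each statement's English description precedes it below -/
import Mathlib

section
/- Suppose A ∈ 𝔅(𝔥_s,𝔉) for some s ∈ (0,1) and that the symmetric operator S is H-small with constants a ∈ [0,1), b ∈ ℝ. If λ∘ < λ_inf − max{√(λ_inf² + 1), ‖A‖_{𝔅(𝔥_s,𝔉)}^{1/(1−s)}, b/(1−a)}, then λ∘ ∈ Z_S. -/
open scoped InnerProductSpace ComplexConjugate

noncomputable section

local notation "⟪" x ", " y "⟫" => @inner ℂ _ _ x y

/-- Abstract context for the paper "On the resolvent of H+A*+A":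
`F` is the Hilbert space `𝔉`, `H1` is the space `𝔥₁ = dom(H)` endowed with the graph
norm, `Hm1` is the dual space `𝔥₋₁`.  `j1 : 𝔥₁ ↪ 𝔉` and `jm : 𝔉 ↪ 𝔥₋₁` are the dense
inclusions, `Hop` is `H` viewed as a bounded operator `𝔥₁ → 𝔉`, `Hbar` is its closure
`H̄ : 𝔉 → 𝔥₋₁`, `lamInf = inf σ(H)`, `res = ρ(H)`, `RF z = (-H+z)⁻¹ : 𝔉 → 𝔥₁`,
`RM z` is its extension `𝔥₋₁ → 𝔉`, `pair` is the duality pairing between `𝔥₋₁` and `𝔥₁`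
(conjugate-linear in the first variable) extending the scalar product of `𝔉`,
`ns s` is the scale norm `‖ψ‖_s = ‖(H²+1)^{s/2}ψ‖` on `𝔥₁` (`0 ≤ s ≤ 1`),
`A ∈ 𝔅(𝔥₁,𝔉)` and `Astar : 𝔉 → 𝔥₋₁` is its dual-pairing adjoint. -/
structure Ctx (F H1 Hm1 : Type*)
    [NormedAddCommGroup F] [InnerProductSpace ℂ F] [CompleteSpace F]
    [NormedAddCommGroup H1] [InnerProductSpace ℂ H1] [CompleteSpace H1]
    [NormedAddCommGroup Hm1] [InnerProductSpace ℂ Hm1] [CompleteSpace Hm1] where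
  j1 : H1 →L[ℂ] F
  jm : F →L[ℂ] Hm1
  Hop : H1 →L[ℂ] F
  Hbar : F →L[ℂ] Hm1
  lamInf : ℝ
  res : Set ℂ
  RF : ℂ → (F →L[ℂ] H1)
  RM : ℂ → (Hm1 →L[ℂ] F)
  pair : Hm1 → H1 → ℂ
  ns : ℝ → H1 → ℝ
  A : H1 →L[ℂ] F
  Astar : F →L[ℂ] Hm1
  j1_inj : Function.Injective j1
  j1_dense : DenseRange j1
  jm_inj : Function.Injective jm
  jm_dense : DenseRange jm
  /-- the norm of `𝔥₁` is the graph norm of `H` -/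
  norm1_sq : ∀ ψ : H1, ‖ψ‖ ^ 2 = ‖j1 ψ‖ ^ 2 + ‖Hop ψ‖ ^ 2
  /-- `H` is symmetric -/
  Hsymm : ∀ ψ φ : H1, ⟪j1 ψ, Hop φ⟫ = ⟪Hop ψ, j1 φ⟫
  /-- `H` is self-adjoint: non-real points belong to `ρ(H)` -/
  res_nonreal : ∀ z : ℂ, z.im ≠ 0 → z ∈ res
  /-- `H` is bounded from below by `lamInf` -/
  res_below : ∀ x : ℝ, x < lamInf → (x : ℂ) ∈ res
  /-- `lamInf` is exactly `inf σ(H)` -/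
  lamInf_not_res : (lamInf : ℂ) ∉ res
  RF_inv_left : ∀ z ∈ res, (RF z).comp (z • j1 - Hop) = ContinuousLinearMap.id ℂ H1
  RF_inv_right : ∀ z ∈ res, (z • j1 - Hop).comp (RF z) = ContinuousLinearMap.id ℂ F
  /-- `H̄` extends `H` -/
  Hbar_ext : Hbar.comp j1 = jm.comp Hop
  /-- `RM z` extends `RF z` -/
  RM_ext : ∀ z ∈ res, (RM z).comp jm = j1.comp (RF z)
  RM_inv_left : ∀ z ∈ res, (RM z).comp (z • jm - Hbar) = ContinuousLinearMap.id ℂ F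
  RM_inv_right : ∀ z ∈ res, (z • jm - Hbar).comp (RM z) = ContinuousLinearMap.id ℂ Hm1
  pair_add : ∀ x y φ, pair (x + y) φ = pair x φ + pair y φ
  pair_smul : ∀ (a : ℂ) x φ, pair (a • x) φ = starRingEnd ℂ a * pair x φ
  pair_addr : ∀ x φ₁ φ₂, pair x (φ₁ + φ₂) = pair x φ₁ + pair x φ₂
  pair_smulr : ∀ (a : ℂ) x φ, pair x (a • φ) = a * pair x φ
  pair_cont : ∀ φ, Continuous fun x => pair x φ
  /-- the pairing extends the scalar product of `𝔉` -/
  pair_jm : ∀ (ψ : F) (φ : H1), pair (jm ψ) φ = ⟪ψ, j1 φ⟫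
  pair_nondeg : ∀ x, (∀ φ, pair x φ = 0) → x = 0
  ns_zero : ∀ ψ, ns 0 ψ = ‖j1 ψ‖
  ns_one : ∀ ψ, ns 1 ψ = ‖ψ‖
  ns_nonneg : ∀ s ψ, 0 ≤ ns s ψ
  ns_mono : ∀ s t : ℝ, 0 ≤ s → s ≤ t → t ≤ 1 → ∀ ψ, ns s ψ ≤ ns t ψ
  /-- interpolation property of the scale of Hilbert spaces -/
  ns_interp : ∀ s : ℝ, 0 ≤ s → s ≤ 1 → ∀ ψ, ns s ψ ≤ ‖ψ‖ ^ s * ‖j1 ψ‖ ^ (1 - s)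
  /-- `Astar` is the dual-pairing adjoint of `A` -/
  Astar_spec : ∀ (ψ : F) (φ : H1), pair (Astar ψ) φ = ⟪ψ, A φ⟫

variable {F H1 Hm1 : Type*}
  [NormedAddCommGroup F] [InnerProductSpace ℂ F] [CompleteSpace F]
  [NormedAddCommGroup H1] [InnerProductSpace ℂ H1] [CompleteSpace H1]
  [NormedAddCommGroup Hm1] [InnerProductSpace ℂ Hm1] [CompleteSpace Hm1]

namespace Ctx

variable (c : Ctx F H1 Hm1)

/-- `G_z := (A R_{z̄})* ∈ 𝔅(𝔉)`. -/
def G (z : ℂ) : F →L[ℂ] F :=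
  ContinuousLinearMap.adjoint (c.A.comp (c.RF (starRingEnd ℂ z)))

/-- `G_z* ∈ 𝔅(𝔉)`, for `z` real this is `G*`. -/
def Gst (lam : ℝ) : F →L[ℂ] F :=
  ContinuousLinearMap.adjoint (c.G (lam : ℂ))

/-- `𝔸 : 𝔥₁ → 𝔉⊕𝔥₁`, `𝔸ψ = Aψ ⊕ ψ`. -/
def Ab : H1 →L[ℂ] (F × H1) :=
  c.A.prod (ContinuousLinearMap.id ℂ H1)

/-- `𝔾_z : 𝔉⊕𝔥₋₁ → 𝔉`, `𝔾_z(ψ⊕φ) = G_zψ + R_zφ`. -/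
def Gb (z : ℂ) : (F × Hm1) →L[ℂ] F :=
  (c.G z).comp (ContinuousLinearMap.fst ℂ F Hm1) +
    (c.RM z).comp (ContinuousLinearMap.snd ℂ F Hm1)

/-- `𝔾_{z̄}* : 𝔉 → 𝔉⊕𝔥₁`, `ψ ↦ (A R_z ψ) ⊕ (R_z ψ)`. -/
def Gbstar (z : ℂ) : F →L[ℂ] (F × H1) :=
  (c.A.comp (c.RF z)).prod (c.RF z)

/-- `M_z = 𝔸(𝔾 - 𝔾_z) = (z-λ∘) 𝔾* 𝔾_z : 𝔉⊕𝔥₋₁ → 𝔉⊕𝔥₁`. -/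
def M (lam : ℝ) (z : ℂ) : (F × Hm1) →L[ℂ] (F × H1) :=
  (z - (lam : ℂ)) • ((c.Gbstar (lam : ℂ)).comp (c.Gb z))

/-- `M' : 𝔉⊕𝔥₋₁ → 𝔉⊕𝔥₁` is a realization of `M_z := 𝔸(𝔾 - 𝔾_z)`, i.e. the second
component of `M' x` is the lift to `𝔥₁` of `(𝔾 - 𝔾_z)x` and the first component is `A`
applied to it. -/
def IsMLift (lam : ℝ) (z : ℂ) (M' : (F × Hm1) →L[ℂ] (F × H1)) : Prop :=
  ∀ x : F × Hm1,
    c.j1 ((M' x).2) = c.Gb (lam : ℂ) x - c.Gb z x ∧ (M' x).1 = c.A ((M' x).2)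

/-- The domain `𝔇 = {ψ ∈ 𝔉 : ψ - Gψ ∈ 𝔥₁}` (with `G = G_{λ∘}`). -/
def Dom (lam : ℝ) : Set F :=
  {ψ | ∃ φ : H1, ψ - c.G (lam : ℂ) ψ = c.j1 φ}

/-- The action of the block operator matrix `Θ_S = [[T_S, 1-G*],[1-G, -R]]` on the element
`ψ ⊕ φ` of its domain `𝔇⊕𝔉`; here `ψ0 ∈ 𝔥₁` is the lift of `(1-G)ψ`, so that
`T_Sψ = (1-G*)S(1-G)ψ = (1-G*)(Sψ0)`. -/
def ThetaS (lam : ℝ) (S : H1 →ₗ[ℂ] F) (ψ : F) (ψ0 : H1) (φ : F) : F × H1 :=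
  (S ψ0 - c.Gst lam (S ψ0) + φ - c.Gst lam φ, ψ0 - c.RF (lam : ℂ) φ)

/-- The action of `Θ_S + M_z` on `ψ ⊕ φ ∈ 𝔇⊕𝔉`. -/
def ThetaMS (lam : ℝ) (S : H1 →ₗ[ℂ] F) (z : ℂ) (ψ : F) (ψ0 : H1) (φ : F) : F × H1 :=
  c.ThetaS lam S ψ ψ0 φ + c.M lam z (ψ, c.jm φ)

/-- `Λ ∈ 𝔅(𝔉⊕𝔥₁, 𝔉⊕𝔥₋₁)` is the (two-sided) inverse of `Θ_S + M_z`. -/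
def IsInvTheta (lam : ℝ) (S : H1 →ₗ[ℂ] F) (z : ℂ)
    (Λ : (F × H1) →L[ℂ] (F × Hm1)) : Prop :=
  (∀ (ψ : F) (ψ0 : H1) (φ : F), c.j1 ψ0 = ψ - c.G (lam : ℂ) ψ →
    Λ (c.ThetaMS lam S z ψ ψ0 φ) = (ψ, c.jm φ)) ∧
  (∀ y : F × H1, ∃ (ψ : F) (ψ0 : H1) (φ : F),
    c.j1 ψ0 = ψ - c.G (lam : ℂ) ψ ∧ Λ y = (ψ, c.jm φ) ∧ c.ThetaMS lam S z ψ ψ0 φ = y)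

/-- `Z_S := {z ∈ ρ(H) : (Θ_S + M_z)⁻¹ ∈ 𝔅(𝔉⊕𝔥₁, 𝔉⊕𝔥₋₁)}`. -/
def ZS (lam : ℝ) (S : H1 →ₗ[ℂ] F) : Set ℂ :=
  {z | z ∈ c.res ∧ ∃ Λ : (F × H1) →L[ℂ] (F × Hm1), c.IsInvTheta lam S z Λ}

/-- `R̂_z = R_z + 𝔾_z Λ 𝔾_{z̄}* : 𝔉 → 𝔉`. -/
def Rhat (z : ℂ) (Λ : (F × H1) →L[ℂ] (F × Hm1)) : F →L[ℂ] F :=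
  c.j1.comp (c.RF z) + (c.Gb z).comp (Λ.comp (c.Gbstar z))

/-- The duality pairing `⟨⟨·,·⟩⟩_{-1,1}` between `𝔉⊕𝔥₋₁` and `𝔉⊕𝔥₁`. -/
def pairX (x : F × Hm1) (y : F × H1) : ℂ :=
  ⟪x.1, y.1⟫ + c.pair x.2 y.2

/-- Assumption (H3): `ran(G_z) ∩ 𝔥₁ = {0}` for all `z ∈ ρ(H)`. -/
def H3 : Prop :=
  ∀ z ∈ c.res, ∀ (ψ : F) (φ : H1), c.G z ψ = c.j1 φ → c.G z ψ = 0

/-- `S` is a symmetric operator (with domain containing `𝔥₁`). -/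
def IsSymmOp (S : H1 →ₗ[ℂ] F) : Prop :=
  ∀ ψ φ : H1, ⟪S ψ, c.j1 φ⟫ = ⟪c.j1 ψ, S φ⟫

/-- `S` is `H`-small with constants `a`, `b`. -/
def HSmall (S : H1 →ₗ[ℂ] F) (a b : ℝ) : Prop :=
  ∀ ψ : H1, ‖S ψ‖ ≤ a * ‖c.Hop ψ‖ + b * ‖c.j1 ψ‖

/-- `HSf ψ ψ0` realizes the action of `H_S = H̄ + A* + A_S` on `ψ ∈ 𝔇` (with `ψ0` the lift
of `(1-G)ψ`): `H_Sψ ∈ 𝔉` is characterized by `H_Sψ = H̄ψ + A*ψ + Aψ0 - T_Sψ` in `𝔥₋₁`. -/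
def IsHSAction (lam : ℝ) (S : H1 →ₗ[ℂ] F) (HSf : F → H1 → F) : Prop :=
  ∀ (ψ : F) (ψ0 : H1), c.j1 ψ0 = ψ - c.G (lam : ℂ) ψ →
    c.jm (HSf ψ ψ0) =
      c.Hbar ψ + c.Astar ψ + c.jm (c.A ψ0 - (S ψ0 - c.Gst lam (S ψ0)))

/-- `Rop = (-(H+W)+z)⁻¹`, the resolvent at `z` of the perturbation of `H` by the
`H`-bounded operator `W` (with domain `𝔥₁`). -/
def IsResolventOf (W : H1 →L[ℂ] F) (z : ℂ) (Rop : F →L[ℂ] F) : Prop :=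
  (∀ ψ : H1, Rop (z • c.j1 ψ - (c.Hop ψ + W ψ)) = c.j1 ψ) ∧
  (∀ χ : F, ∃ ψ : H1, Rop χ = c.j1 ψ ∧ z • c.j1 ψ - (c.Hop ψ + W ψ) = χ)

/-- `Rop = (-H_S+z)⁻¹`, the resolvent at `z` of the operator `H_S` with domain `𝔇` whose
action is realized by `HSf`. -/
def IsResolventOfD (lam : ℝ) (HSf : F → H1 → F) (z : ℂ) (Rop : F →L[ℂ] F) : Prop :=
  (∀ (ψ : F) (ψ0 : H1), c.j1 ψ0 = ψ - c.G (lam : ℂ) ψ →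
    Rop (z • ψ - HSf ψ ψ0) = ψ) ∧
  (∀ χ : F, ∃ (ψ : F) (ψ0 : H1),
    c.j1 ψ0 = ψ - c.G (lam : ℂ) ψ ∧ Rop χ = ψ ∧ z • ψ - HSf ψ ψ0 = χ)

/-- `ψ ∈ 𝔥_s` (for `0 ≤ s ≤ 1`), i.e. `ψ ∈ 𝔉` is the limit of a `‖·‖_s`-Cauchy sequence
of elements of `𝔥₁`. -/
def memHs (s : ℝ) (ψ : F) : Prop :=
  ∃ u : ℕ → H1, Filter.Tendsto (fun n => c.j1 (u n)) Filter.atTop (nhds ψ) ∧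
    ∀ ε > 0, ∃ N, ∀ m ≥ N, ∀ n ≥ N, c.ns s (u m - u n) < ε

/-- `T ∈ 𝔅(𝔥_s, 𝔉)` (with `T` given on `𝔥₁`): `T` is bounded for the `‖·‖_s`-norm. -/
def MemBs (s : ℝ) (T : H1 →L[ℂ] F) : Prop :=
  ∃ C : ℝ, 0 ≤ C ∧ ∀ ψ : H1, ‖T ψ‖ ≤ C * c.ns s ψ

/-- `T` (with domain containing `𝔥₁ ⊆ 𝔥_{1/2}`) is closable as an operator in `𝔉`. -/
def ClosableOp (T : H1 →L[ℂ] F) : Prop :=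
  ∀ (u : ℕ → H1) (χ : F),
    Filter.Tendsto (fun n => c.j1 (u n)) Filter.atTop (nhds 0) →
    Filter.Tendsto (fun n => T (u n)) Filter.atTop (nhds χ) → χ = 0

/-- `Tstar` is (the restriction to `𝔥₁` of) the adjoint of `T`. -/
def IsAdjointOn (T Tstar : H1 →L[ℂ] F) : Prop :=
  ∀ ψ φ : H1, ⟪Tstar ψ, c.j1 φ⟫ = ⟪c.j1 ψ, T φ⟫

/-- `G_{n,z} := (A_n R_{z̄})* ∈ 𝔅(𝔉)`. -/
def Gn (An : H1 →L[ℂ] F) (z : ℂ) : F →L[ℂ] F :=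
  ContinuousLinearMap.adjoint (An.comp (c.RF (starRingEnd ℂ z)))

/-- `B = A_n R A_n* ∈ 𝔅(𝔉)`: since `R A_n*ψ = G_{n,λ∘}ψ ∈ 𝔥₁`, the operator `B` is
`A_n` applied to the lift of `G_{n,λ∘}ψ`. -/
def IsAnRAn (lam : ℝ) (An : H1 →L[ℂ] F) (B : F →L[ℂ] F) : Prop :=
  ∀ ψ : F, ∃ φ : H1, c.j1 φ = c.Gn An (lam : ℂ) ψ ∧ B ψ = An φ

/-- `𝔾_{n,z}` as a bounded operator `𝔉⊕𝔉 → 𝔉`, `ψ⊕φ ↦ G_{n,z}ψ + R_zφ`. -/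
def Gnb (An : H1 →L[ℂ] F) (z : ℂ) : (F × F) →L[ℂ] F :=
  (c.Gn An z).comp (ContinuousLinearMap.fst ℂ F F) +
    (c.j1.comp (c.RF z)).comp (ContinuousLinearMap.snd ℂ F F)

/-- `𝔾_{n,z̄}* : 𝔉 → 𝔉⊕𝔉`, `ψ ↦ (A_n R_z ψ) ⊕ (R_z ψ)`. -/
def Gnbstar (An : H1 →L[ℂ] F) (z : ℂ) : F →L[ℂ] (F × F) :=
  (An.comp (c.RF z)).prod (c.j1.comp (c.RF z))

/-- `M_{n,z} = 𝔸_n(𝔾_n - 𝔾_{n,z}) = (z-λ∘)𝔾_n*𝔾_{n,z} : 𝔉⊕𝔉 → 𝔉⊕𝔥₁ ⊆ 𝔉⊕𝔉`. -/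
def Mn (lam : ℝ) (An : H1 →L[ℂ] F) (z : ℂ) : (F × F) →L[ℂ] (F × F) :=
  (z - (lam : ℂ)) • ((c.Gnbstar An (lam : ℂ)).comp (c.Gnb An z))

/-- `Θ_n = [[E_n - A_nRA_n*, 1-G_n*],[1-G_n, -R]] : 𝔉⊕𝔉 → 𝔉⊕𝔉`. -/
def Thetan (lam : ℝ) (An : H1 →L[ℂ] F) (En AnRAn : F →L[ℂ] F) :
    (F × F) →L[ℂ] (F × F) :=
  ((En - AnRAn).comp (ContinuousLinearMap.fst ℂ F F) +
      ((1 : F →L[ℂ] F) - An.comp (c.RF (lam : ℂ))).comp (ContinuousLinearMap.snd ℂ F F)).prod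
    (((1 : F →L[ℂ] F) - c.Gn An (lam : ℂ)).comp (ContinuousLinearMap.fst ℂ F F) -
      (c.j1.comp (c.RF (lam : ℂ))).comp (ContinuousLinearMap.snd ℂ F F))

end Ctx

section AuxiliaryLemmas

variable (c : Ctx F H1 Hm1)

private lemma RFleft {z : ℂ} (hz : z ∈ c.res) (ψ : H1) :
    c.RF z (z • c.j1 ψ - c.Hop ψ) = ψ := by
  have h := congrArg (fun T : H1 →L[ℂ] H1 => T ψ) (c.RF_inv_left z hz)
  simpa using h

private lemma RFright {z : ℂ} (hz : z ∈ c.res) (φ : F) :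
    z • c.j1 (c.RF z φ) - c.Hop (c.RF z φ) = φ := by
  have h := congrArg (fun T : F →L[ℂ] F => T φ) (c.RF_inv_right z hz)
  simpa using h

private lemma resId {z w : ℂ} (hz : z ∈ c.res) (hw : w ∈ c.res) (φ : F) :
    c.j1 (c.RF w φ) - c.j1 (c.RF z φ) = (z - w) • c.j1 (c.RF z (c.j1 (c.RF w φ))) := by
  have h1 : c.RF z (z • c.j1 (c.RF w φ) - c.Hop (c.RF w φ)) = c.RF w φ := RFleft c hz _
  have h2 : w • c.j1 (c.RF w φ) - c.Hop (c.RF w φ) = φ := RFright c hw φ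
  have h3 : z • c.j1 (c.RF w φ) - c.Hop (c.RF w φ)
      = (z - w) • c.j1 (c.RF w φ) + (w • c.j1 (c.RF w φ) - c.Hop (c.RF w φ)) := by
    rw [sub_smul]; abel
  rw [h3, h2, map_add, map_smul] at h1
  have h4 := congrArg c.j1 h1
  rw [map_add, map_smul] at h4
  rw [sub_eq_iff_eq_add]
  exact h4.symm

private lemma Bsym {x : ℝ} (hx : (x : ℂ) ∈ c.res) (φ φ' : F) :
    ⟪c.j1 (c.RF (x : ℂ) φ), φ'⟫ = ⟪φ, c.j1 (c.RF (x : ℂ) φ')⟫ := by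
  have h := RFright c hx φ
  have h' := RFright c hx φ'
  calc ⟪c.j1 (c.RF (x : ℂ) φ), φ'⟫
      = ⟪c.j1 (c.RF (x : ℂ) φ), (x : ℂ) • c.j1 (c.RF (x : ℂ) φ') - c.Hop (c.RF (x : ℂ) φ')⟫ := by
        rw [h']
    _ = (x : ℂ) * ⟪c.j1 (c.RF (x : ℂ) φ), c.j1 (c.RF (x : ℂ) φ')⟫
        - ⟪c.Hop (c.RF (x : ℂ) φ), c.j1 (c.RF (x : ℂ) φ')⟫ := by
        rw [inner_sub_right, inner_smul_right, c.Hsymm]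
    _ = ⟪(x : ℂ) • c.j1 (c.RF (x : ℂ) φ) - c.Hop (c.RF (x : ℂ) φ), c.j1 (c.RF (x : ℂ) φ')⟫ := by
        rw [inner_sub_left, inner_smul_left, Complex.conj_ofReal]
    _ = ⟪φ, c.j1 (c.RF (x : ℂ) φ')⟫ := by rw [h]

private lemma cs_bound {C : F →L[ℂ] F} (hsym : ∀ x y : F, ⟪C x, y⟫ = ⟪x, C y⟫)
    (hpos : ∀ x : F, 0 ≤ (⟪x, C x⟫).re) (φ : F) :
    ‖C φ‖ ^ 2 ≤ ‖C‖ * (⟪φ, C φ⟫).re := by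
  have hCC : ⟪φ, C (C φ)⟫ = ⟪C φ, C φ⟫ := (hsym φ (C φ)).symm
  have hself : (⟪C φ, C φ⟫).re = ‖C φ‖ ^ 2 := by
    simpa using @inner_self_eq_norm_sq ℂ F _ _ _ (C φ)
  have hquad : ∀ t : ℝ, 0 ≤ (⟪C φ, C (C φ)⟫).re * (t * t) + (2 * ‖C φ‖ ^ 2) * t
      + (⟪φ, C φ⟫).re := by
    intro t
    have h0 := hpos (φ + (t : ℂ) • C φ)
    have e : ⟪φ + (t : ℂ) • C φ, C (φ + (t : ℂ) • C φ)⟫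
        = ⟪φ, C φ⟫ + ((t : ℝ) : ℂ) * ⟪C φ, C φ⟫ + (((t : ℝ) : ℂ) * ⟪C φ, C φ⟫
            + ((t * t : ℝ) : ℂ) * ⟪C φ, C (C φ)⟫) := by
      rw [map_add, map_smul, inner_add_left, inner_add_right, inner_add_right,
        inner_smul_left, inner_smul_right, inner_smul_right, inner_smul_left,
        Complex.conj_ofReal, hCC]
      push_cast
      ring
    have ere := congrArg Complex.re e
    simp only [Complex.add_re, Complex.re_ofReal_mul, hself] at ere
    rw [ere] at h0
    nlinarith [h0]
  have hdisc := discrim_le_zero hquad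
  rw [discrim] at hdisc
  have hγ : (⟪C φ, C (C φ)⟫).re ≤ ‖C‖ * ‖C φ‖ ^ 2 := by
    have h1 : (⟪C φ, C (C φ)⟫).re ≤ ‖C φ‖ * ‖C (C φ)‖ := by
      have := re_inner_le_norm (𝕜 := ℂ) (C φ) (C (C φ))
      simpa using this
    have h2 : ‖C (C φ)‖ ≤ ‖C‖ * ‖C φ‖ := C.le_opNorm _
    nlinarith [norm_nonneg (C φ), norm_nonneg C]
  have hα := hpos φ
  rcases eq_or_lt_of_le (by positivity : (0 : ℝ) ≤ ‖C φ‖ ^ 2) with h0 | h0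
  · rw [← h0]; positivity
  · nlinarith [hdisc, mul_le_mul_of_nonneg_right hγ hα]

set_option maxHeartbeats 2000000 in
private lemma B_nonpos {x : ℝ} (hx : x < c.lamInf) (φ0 : F) :
    (⟪φ0, c.j1 (c.RF (x : ℂ) φ0)⟫).re ≤ 0 := by
  by_contra hcon
  push_neg at hcon
  have hxres : (x : ℂ) ∈ c.res := c.res_below x hx
  set B : F →L[ℂ] F := c.j1.comp (c.RF (x : ℂ)) with hB
  have hBapp : ∀ u : F, B u = c.j1 (c.RF (x : ℂ) u) := fun u => rfl
  have hBsym : ∀ u v : F, ⟪B u, v⟫ = ⟪u, B v⟫ := fun u v => Bsym c hxres u v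
  have hcon' : 0 < (⟪φ0, B φ0⟫).re := hcon
  have hscale : ∀ (r : ℝ) (u : F), (⟪((r : ℝ) : ℂ) • u, B (((r : ℝ) : ℂ) • u)⟫).re
      = r ^ 2 * (⟪u, B u⟫).re := by
    intro r u
    rw [map_smul, inner_smul_left, inner_smul_right, Complex.conj_ofReal, ← mul_assoc,
      ← Complex.ofReal_mul, Complex.re_ofReal_mul]
    ring
  set E : Set ℝ := (fun u : F => (⟪u, B u⟫).re) '' {u : F | ‖u‖ ≤ 1} with hE
  have hne : E.Nonempty := ⟨(⟪(0 : F), B 0⟫).re, ⟨0, by simp, rfl⟩⟩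
  have hbdd : BddAbove E := by
    refine ⟨‖B‖, ?_⟩
    rintro y ⟨u, hu, rfl⟩
    have h1 : (⟪u, B u⟫).re ≤ ‖u‖ * ‖B u‖ := by
      simpa using re_inner_le_norm (𝕜 := ℂ) u (B u)
    have h2 : ‖B u‖ ≤ ‖B‖ * ‖u‖ := B.le_opNorm u
    have h3 : (0 : ℝ) ≤ ‖u‖ := norm_nonneg u
    have h4 : (0 : ℝ) ≤ ‖B‖ := norm_nonneg B
    simp only [Set.mem_setOf_eq] at hu
    show (⟪u, B u⟫).re ≤ ‖B‖
    have h5 : ‖u‖ ^ 2 ≤ 1 := by nlinarith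
    nlinarith [mul_le_mul_of_nonneg_left h2 h3]
  set M := sSup E with hM
  have hMub : ∀ u : F, (⟪u, B u⟫).re ≤ M * ‖u‖ ^ 2 := by
    intro u
    rcases eq_or_ne u 0 with rfl | hu0
    · simp
    · have hn : 0 < ‖u‖ := norm_pos_iff.mpr hu0
      have hmem : (⟪((‖u‖⁻¹ : ℝ) : ℂ) • u, B (((‖u‖⁻¹ : ℝ) : ℂ) • u)⟫).re ∈ E := by
        refine ⟨((‖u‖⁻¹ : ℝ) : ℂ) • u, ?_, rfl⟩
        simp only [Set.mem_setOf_eq, norm_smul, Complex.norm_real, Real.norm_eq_abs,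
          abs_of_nonneg (inv_nonneg.mpr hn.le)]
        exact le_of_eq (inv_mul_cancel₀ hn.ne')
      have h2 : (‖u‖⁻¹) ^ 2 * (⟪u, B u⟫).re ≤ M := by
        rw [← hscale]; exact le_csSup hbdd hmem
      have h3 := mul_le_mul_of_nonneg_left h2 (sq_nonneg ‖u‖)
      calc (⟪u, B u⟫).re = ‖u‖ ^ 2 * ((‖u‖⁻¹) ^ 2 * (⟪u, B u⟫).re) := by
            field_simp
        _ ≤ ‖u‖ ^ 2 * M := h3
        _ = M * ‖u‖ ^ 2 := mul_comm _ _
  have hM0 : 0 < M := by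
    have hφ0 : φ0 ≠ 0 := by
      rintro rfl; simp at hcon'
    have hn : 0 < ‖φ0‖ := norm_pos_iff.mpr hφ0
    have hmem : (⟪((‖φ0‖⁻¹ : ℝ) : ℂ) • φ0, B (((‖φ0‖⁻¹ : ℝ) : ℂ) • φ0)⟫).re ∈ E := by
      refine ⟨((‖φ0‖⁻¹ : ℝ) : ℂ) • φ0, ?_, rfl⟩
      simp only [Set.mem_setOf_eq, norm_smul, Complex.norm_real, Real.norm_eq_abs,
        abs_of_nonneg (inv_nonneg.mpr hn.le)]
      exact le_of_eq (inv_mul_cancel₀ hn.ne')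
    have h2 : (‖φ0‖⁻¹) ^ 2 * (⟪φ0, B φ0⟫).re ≤ M := by
      rw [← hscale]; exact le_csSup hbdd hmem
    have h3 : 0 < (‖φ0‖⁻¹) ^ 2 * (⟪φ0, B φ0⟫).re :=
      mul_pos (pow_pos (inv_pos.mpr hn) 2) hcon'
    linarith
  -- invertibility of M - B via the resolvent at x' = x - M⁻¹
  have hx' : x - M⁻¹ < c.lamInf := by
    have := inv_pos.mpr hM0; linarith
  have hx'res : ((x - M⁻¹ : ℝ) : ℂ) ∈ c.res := c.res_below _ hx'
  set B' : F →L[ℂ] F := c.j1.comp (c.RF ((x - M⁻¹ : ℝ) : ℂ)) with hB'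
  have hcast : (x : ℂ) - ((x - M⁻¹ : ℝ) : ℂ) = ((M⁻¹ : ℝ) : ℂ) := by push_cast; ring
  have hres1 : ∀ u, B' u - B u = ((M⁻¹ : ℝ) : ℂ) • B (B' u) := by
    intro u
    have h := resId c hxres hx'res u
    rw [hcast] at h
    exact h
  have hres2 : ∀ u, B u - B' u = (-((M⁻¹ : ℝ) : ℂ)) • B' (B u) := by
    intro u
    have h := resId c hx'res hxres u
    rw [show ((x - M⁻¹ : ℝ) : ℂ) - (x : ℂ) = -((M⁻¹ : ℝ) : ℂ) by push_cast; ring] at h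
    exact h
  set Cop : F →L[ℂ] F := ((M : ℝ) : ℂ) • (1 : F →L[ℂ] F) - B with hCop
  set J : F →L[ℂ] F := ((M⁻¹ : ℝ) : ℂ) • ((1 : F →L[ℂ] F) + ((M⁻¹ : ℝ) : ℂ) • B') with hJ
  have hMm : ((M : ℝ) : ℂ) * ((M⁻¹ : ℝ) : ℂ) = 1 := by
    push_cast
    exact_mod_cast mul_inv_cancel₀ (show (M : ℝ) ≠ 0 from hM0.ne')
  have hCopapp : ∀ u : F, Cop u = ((M : ℝ) : ℂ) • u - B u := by
    intro u
    simp [hCop]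
  have hJapp : ∀ u : F, J u = ((M⁻¹ : ℝ) : ℂ) • u
      + (((M⁻¹ : ℝ) : ℂ) * ((M⁻¹ : ℝ) : ℂ)) • B' u := by
    intro u
    simp [hJ, smul_add, smul_smul]
  have hres2' : ∀ u : F, ((M⁻¹ : ℝ) : ℂ) • B' (B u) = B' u - B u := by
    intro u
    have h := hres2 u
    rw [neg_smul] at h
    have h2 : -(B u - B' u) = ((M⁻¹ : ℝ) : ℂ) • B' (B u) := by rw [h, neg_neg]
    rw [neg_sub] at h2
    exact h2.symm
  have hCJ : ∀ u : F, Cop (J u) = u := by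
    intro u
    have e1 : B (J u) = ((M⁻¹ : ℝ) : ℂ) • B u
        + (((M⁻¹ : ℝ) : ℂ) * ((M⁻¹ : ℝ) : ℂ)) • B (B' u) := by
      rw [hJapp, map_add, map_smul, map_smul]
    have e2 : ((M : ℝ) : ℂ) • (J u) = u + ((M⁻¹ : ℝ) : ℂ) • B' u := by
      rw [hJapp, smul_add, smul_smul, smul_smul, ← mul_assoc, hMm, one_smul, one_mul]
    have e3 : (((M⁻¹ : ℝ) : ℂ) * ((M⁻¹ : ℝ) : ℂ)) • B (B' u)
        = ((M⁻¹ : ℝ) : ℂ) • (B' u - B u) := by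
      rw [hres1 u, smul_smul]
    rw [hCopapp, e1, e2, e3, smul_sub]
    abel
  have hMm' : ((M⁻¹ : ℝ) : ℂ) * ((M : ℝ) : ℂ) = 1 := by rw [mul_comm]; exact hMm
  have hJC : ∀ u : F, J (Cop u) = u := by
    intro u
    have e1 : B' (Cop u) = ((M : ℝ) : ℂ) • B' u - B' (B u) := by
      rw [hCopapp, map_sub, map_smul]
    have e2 : J (Cop u) = ((M⁻¹ : ℝ) : ℂ) • Cop u
        + (((M⁻¹ : ℝ) : ℂ) * ((M⁻¹ : ℝ) : ℂ)) • B' (Cop u) := hJapp _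
    have e3 : ((M⁻¹ : ℝ) : ℂ) • Cop u = u - ((M⁻¹ : ℝ) : ℂ) • B u := by
      rw [hCopapp, smul_sub, smul_smul, hMm', one_smul]
    have e4 : (((M⁻¹ : ℝ) : ℂ) * ((M⁻¹ : ℝ) : ℂ)) • B' (Cop u)
        = ((M⁻¹ : ℝ) : ℂ) • B' u - ((M⁻¹ : ℝ) : ℂ) • (B' u - B u) := by
      rw [e1, smul_sub, smul_smul, mul_assoc, hMm', mul_one, ← smul_smul, hres2' u]
    rw [e2, e3, e4, smul_sub]
    abel
  -- positivity and symmetry of Cop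
  have hCre : ∀ u : F, (⟪u, Cop u⟫).re = M * ‖u‖ ^ 2 - (⟪u, B u⟫).re := by
    intro u
    rw [hCopapp, inner_sub_right, inner_smul_right, Complex.sub_re, Complex.re_ofReal_mul]
    have : (⟪u, u⟫).re = ‖u‖ ^ 2 := by simpa using @inner_self_eq_norm_sq ℂ F _ _ _ u
    rw [this]
  have hCsym : ∀ u v : F, ⟪Cop u, v⟫ = ⟪u, Cop v⟫ := by
    intro u v
    rw [hCopapp, hCopapp, inner_sub_left, inner_sub_right, inner_smul_left, inner_smul_right,
      Complex.conj_ofReal, hBsym u v]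
  have hCpos : ∀ u : F, 0 ≤ (⟪u, Cop u⟫).re := by
    intro u
    rw [hCre]
    linarith [hMub u]
  set K' := ‖B‖ * (‖J‖ ^ 2 * ‖Cop‖) with hK'
  have hK'0 : 0 ≤ K' := by positivity
  set ε := M / (2 * (1 + K')) with hε
  have hεpos : 0 < ε := by positivity
  obtain ⟨y, hyE, hy⟩ := exists_lt_of_lt_csSup hne (show M - ε < M by linarith)
  obtain ⟨u, hu1, rfl⟩ := hyE
  simp only [Set.mem_setOf_eq] at hu1
  have hy' : M - ε < (⟪u, B u⟫).re := hy
  have h1 : (⟪u, Cop u⟫).re ≤ ε := by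
    rw [hCre]
    have hu2 : ‖u‖ ^ 2 ≤ 1 := by nlinarith [norm_nonneg u]
    nlinarith [hy', hM0, hu2]
  have h2 : ‖Cop u‖ ^ 2 ≤ ‖Cop‖ * (⟪u, Cop u⟫).re := cs_bound hCsym hCpos u
  have h2' : ‖Cop u‖ ^ 2 ≤ ‖Cop‖ * ε :=
    le_trans h2 (mul_le_mul_of_nonneg_left h1 (norm_nonneg Cop))
  have h3 : ‖u‖ ≤ ‖J‖ * ‖Cop u‖ := by
    calc ‖u‖ = ‖J (Cop u)‖ := by rw [hJC u]
      _ ≤ ‖J‖ * ‖Cop u‖ := J.le_opNorm _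
  have h3' : ‖u‖ ^ 2 ≤ ‖J‖ ^ 2 * ‖Cop u‖ ^ 2 := by
    nlinarith [norm_nonneg u, norm_nonneg (Cop u), norm_nonneg J]
  have h4 : (⟪u, B u⟫).re ≤ ‖B‖ * ‖u‖ ^ 2 := by
    have ha : (⟪u, B u⟫).re ≤ ‖u‖ * ‖B u‖ := by
      simpa using re_inner_le_norm (𝕜 := ℂ) u (B u)
    nlinarith [B.le_opNorm u, norm_nonneg u, norm_nonneg (B u), norm_nonneg B]
  have h5 : M - ε ≤ K' * ε := by
    have c1 : (⟪u, B u⟫).re ≤ ‖B‖ * (‖J‖ ^ 2 * (‖Cop‖ * ε)) := by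
      calc (⟪u, B u⟫).re ≤ ‖B‖ * ‖u‖ ^ 2 := h4
        _ ≤ ‖B‖ * (‖J‖ ^ 2 * ‖Cop u‖ ^ 2) := mul_le_mul_of_nonneg_left h3' (norm_nonneg B)
        _ ≤ ‖B‖ * (‖J‖ ^ 2 * (‖Cop‖ * ε)) := by
            refine mul_le_mul_of_nonneg_left ?_ (norm_nonneg B)
            exact mul_le_mul_of_nonneg_left h2' (by positivity)
    calc M - ε ≤ (⟪u, B u⟫).re := le_of_lt hy'
      _ ≤ ‖B‖ * (‖J‖ ^ 2 * (‖Cop‖ * ε)) := c1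
      _ = K' * ε := by rw [hK']; ring
  have h6 : ε * (1 + K') = M / 2 := by
    rw [hε]
    field_simp
  linarith

private lemma qf (ψ : H1) :
    c.lamInf * ‖c.j1 ψ‖ ^ 2 ≤ (⟪c.j1 ψ, c.Hop ψ⟫).re := by
  have key : ∀ x : ℝ, x < c.lamInf → x * ‖c.j1 ψ‖ ^ 2 ≤ (⟪c.j1 ψ, c.Hop ψ⟫).re := by
    intro x hx
    have hxres : (x : ℂ) ∈ c.res := c.res_below x hx
    have hRφ : c.RF (x : ℂ) ((x : ℂ) • c.j1 ψ - c.Hop ψ) = ψ := RFleft c hxres ψ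
    have h0 := B_nonpos c hx ((x : ℂ) • c.j1 ψ - c.Hop ψ)
    rw [hRφ] at h0
    have hexp : (⟪(x : ℂ) • c.j1 ψ - c.Hop ψ, c.j1 ψ⟫).re
        = x * ‖c.j1 ψ‖ ^ 2 - (⟪c.j1 ψ, c.Hop ψ⟫).re := by
      rw [inner_sub_left, inner_smul_left, Complex.conj_ofReal, Complex.sub_re,
        Complex.re_ofReal_mul]
      have h1 : (⟪c.j1 ψ, c.j1 ψ⟫).re = ‖c.j1 ψ‖ ^ 2 := by
        simpa using @inner_self_eq_norm_sq ℂ F _ _ _ (c.j1 ψ)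
      have h2 : (⟪c.Hop ψ, c.j1 ψ⟫).re = (⟪c.j1 ψ, c.Hop ψ⟫).re := by
        rw [← inner_conj_symm (c.Hop ψ) (c.j1 ψ)]
        exact Complex.conj_re _
      rw [h1, h2]
    rw [hexp] at h0
    linarith
  by_contra hcon
  push_neg at hcon
  have hn2 : (0 : ℝ) ≤ ‖c.j1 ψ‖ ^ 2 := sq_nonneg _
  rcases eq_or_lt_of_le hn2 with h0 | hpos
  · have h1 := key (c.lamInf - 1) (by linarith)
    have e1 : (c.lamInf - 1) * ‖c.j1 ψ‖ ^ 2 = 0 := by rw [← h0]; ring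
    have e2 : c.lamInf * ‖c.j1 ψ‖ ^ 2 = 0 := by rw [← h0]; ring
    rw [e2] at hcon
    rw [e1] at h1
    linarith
  · set q := (⟪c.j1 ψ, c.Hop ψ⟫).re with hq
    have hx : q / ‖c.j1 ψ‖ ^ 2 < c.lamInf := (div_lt_iff₀ hpos).mpr (by linarith [hcon])
    have h1 := key ((q / ‖c.j1 ψ‖ ^ 2 + c.lamInf) / 2) (by linarith)
    have h2 : ((q / ‖c.j1 ψ‖ ^ 2 + c.lamInf) / 2) * ‖c.j1 ψ‖ ^ 2
        = (q + c.lamInf * ‖c.j1 ψ‖ ^ 2) / 2 := by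
      rw [div_mul_eq_mul_div, add_mul, div_mul_cancel₀ q hpos.ne']
    rw [h2] at h1
    linarith

private lemma graph_est {lam : ℝ} (hlamneg : lam < 0)
    (hdsq : c.lamInf ^ 2 + 1 ≤ (c.lamInf - lam) ^ 2) (ψ : H1) :
    ‖ψ‖ ≤ ‖(lam : ℂ) • c.j1 ψ - c.Hop ψ‖ ∧
      (c.lamInf - lam) * ‖c.j1 ψ‖ ≤ ‖(lam : ℂ) • c.j1 ψ - c.Hop ψ‖ := by
  have hq : c.lamInf * ‖c.j1 ψ‖ ^ 2 ≤ (⟪c.j1 ψ, c.Hop ψ⟫).re := qf c ψ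
  have hχ : ‖(lam : ℂ) • c.j1 ψ - c.Hop ψ‖ ^ 2
      = lam ^ 2 * ‖c.j1 ψ‖ ^ 2 - 2 * lam * (⟪c.j1 ψ, c.Hop ψ⟫).re + ‖c.Hop ψ‖ ^ 2 := by
    calc ‖(lam : ℂ) • c.j1 ψ - c.Hop ψ‖ ^ 2
        = ‖(lam : ℂ) • c.j1 ψ‖ ^ 2 - 2 * (⟪(lam : ℂ) • c.j1 ψ, c.Hop ψ⟫).re
          + ‖c.Hop ψ‖ ^ 2 := by
          simpa only [RCLike.re_to_complex] using @norm_sub_sq ℂ F _ _ _ ((lam : ℂ) • c.j1 ψ) (c.Hop ψ)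
      _ = lam ^ 2 * ‖c.j1 ψ‖ ^ 2 - 2 * lam * (⟪c.j1 ψ, c.Hop ψ⟫).re + ‖c.Hop ψ‖ ^ 2 := by
          rw [inner_smul_left, Complex.conj_ofReal, Complex.re_ofReal_mul, norm_smul,
            Complex.norm_real]
          rw [Real.norm_eq_abs, mul_pow, sq_abs]
          ring
  constructor
  · have hkey : (0 : ℝ) ≤ lam ^ 2 - 2 * lam * c.lamInf - 1 := by nlinarith [hdsq]
    have hmul := mul_le_mul_of_nonneg_left hq (by linarith : (0 : ℝ) ≤ -(2 * lam))
    have h2 : ‖c.j1 ψ‖ ^ 2 + ‖c.Hop ψ‖ ^ 2 ≤ ‖(lam : ℂ) • c.j1 ψ - c.Hop ψ‖ ^ 2 := by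
      nlinarith [mul_nonneg hkey (sq_nonneg ‖c.j1 ψ‖)]
    have h3 : ‖ψ‖ ^ 2 ≤ ‖(lam : ℂ) • c.j1 ψ - c.Hop ψ‖ ^ 2 := by
      rw [c.norm1_sq ψ]; exact h2
    exact le_of_pow_le_pow_left₀ two_ne_zero (norm_nonneg _) h3
  · have hip : (⟪c.j1 ψ, (lam : ℂ) • c.j1 ψ - c.Hop ψ⟫).re
        = lam * ‖c.j1 ψ‖ ^ 2 - (⟪c.j1 ψ, c.Hop ψ⟫).re := by
      rw [inner_sub_right, inner_smul_right, Complex.sub_re, Complex.re_ofReal_mul]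
      have h1 : (⟪c.j1 ψ, c.j1 ψ⟫).re = ‖c.j1 ψ‖ ^ 2 := by
        simpa using @inner_self_eq_norm_sq ℂ F _ _ _ (c.j1 ψ)
      rw [h1]
    have hcs : -(lam * ‖c.j1 ψ‖ ^ 2 - (⟪c.j1 ψ, c.Hop ψ⟫).re)
        ≤ ‖c.j1 ψ‖ * ‖(lam : ℂ) • c.j1 ψ - c.Hop ψ‖ := by
      have h1 := re_inner_le_norm (𝕜 := ℂ) (c.j1 ψ) (-((lam : ℂ) • c.j1 ψ - c.Hop ψ))
      rw [inner_neg_right] at h1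
      simp only [RCLike.re_to_complex, Complex.neg_re, norm_neg] at h1
      rw [hip] at h1
      exact h1
    have h4 : (c.lamInf - lam) * ‖c.j1 ψ‖ ^ 2
        ≤ ‖c.j1 ψ‖ * ‖(lam : ℂ) • c.j1 ψ - c.Hop ψ‖ := by nlinarith [hq, hcs]
    rcases eq_or_lt_of_le (norm_nonneg (c.j1 ψ)) with h0 | h0
    · rw [← h0, mul_zero]
      exact norm_nonneg _
    · have h5 : ((c.lamInf - lam) * ‖c.j1 ψ‖) * ‖c.j1 ψ‖
          ≤ ‖(lam : ℂ) • c.j1 ψ - c.Hop ψ‖ * ‖c.j1 ψ‖ := by nlinarith [h4]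
      exact le_of_mul_le_mul_right h5 h0

end AuxiliaryLemmas

set_option maxHeartbeats 2000000 in
/-- Suppose `A ∈ 𝔅(𝔥_s,𝔉)` for some `s ∈ (0,1)` and that the symmetric
operator `S` is `H`-small with constants `a ∈ [0,1)`, `b`.  If
`λ∘ < λ_inf - max{√(λ_inf²+1), ‖A‖_{𝔅(𝔥_s,𝔉)}^(1/(1-s)), b/(1-a)}`, then `λ∘ ∈ Z_S`. -/
theorem statement9 (c : Ctx F H1 Hm1)
    (s : ℝ) (hs : s ∈ Set.Ioo (0 : ℝ) 1)
    (CA : ℝ) (hCA : 0 ≤ CA) (hA : ∀ ψ : H1, ‖c.A ψ‖ ≤ CA * c.ns s ψ)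
    (S : H1 →ₗ[ℂ] F) (hS : c.IsSymmOp S)
    (a b : ℝ) (ha0 : 0 ≤ a) (ha1 : a < 1) (hsmall : c.HSmall S a b)
    (lam : ℝ)
    (hlam : lam < c.lamInf -
      max (max (Real.sqrt (c.lamInf ^ 2 + 1)) (CA ^ (1 / (1 - s)))) (b / (1 - a))) :
    (lam : ℂ) ∈ c.ZS lam S := by
  obtain ⟨hs0, hs1⟩ := hs
  -- numerical consequences of the hypothesis on `lam`
  have hmd : max (max (Real.sqrt (c.lamInf ^ 2 + 1)) (CA ^ (1 / (1 - s)))) (b / (1 - a))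
      < c.lamInf - lam := by linarith
  have hd1 : Real.sqrt (c.lamInf ^ 2 + 1) < c.lamInf - lam :=
    lt_of_le_of_lt (le_trans (le_max_left _ _) (le_max_left _ _)) hmd
  have hd2 : CA ^ (1 / (1 - s)) < c.lamInf - lam :=
    lt_of_le_of_lt (le_trans (le_max_right _ _) (le_max_left _ _)) hmd
  have hd3 : b / (1 - a) < c.lamInf - lam := lt_of_le_of_lt (le_max_right _ _) hmd
  set d := c.lamInf - lam with hdd
  have hd0 : 0 < d := lt_of_le_of_lt (Real.sqrt_nonneg _) hd1
  have hsqrt : Real.sqrt (c.lamInf ^ 2 + 1) ^ 2 = c.lamInf ^ 2 + 1 :=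
    Real.sq_sqrt (by positivity)
  have hdsq : c.lamInf ^ 2 + 1 ≤ d ^ 2 := by
    nlinarith [hd1, Real.sqrt_nonneg (c.lamInf ^ 2 + 1)]
  have habs : |c.lamInf| < d := by
    have h1 : |c.lamInf| = Real.sqrt (c.lamInf ^ 2) := (Real.sqrt_sq_eq_abs c.lamInf).symm
    rw [h1]
    exact lt_of_le_of_lt (Real.sqrt_le_sqrt (by linarith)) hd1
  have hlamneg : lam < 0 := by
    have h1 := le_abs_self c.lamInf
    linarith
  have hllt : lam < c.lamInf := by linarith
  have hres : ((lam : ℝ) : ℂ) ∈ c.res := c.res_below lam hllt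
  -- resolvent estimates
  have hgraph := fun ψ : H1 => graph_est c hlamneg (by rw [← hdd] at *; exact hdsq) ψ
  set R := c.RF ((lam : ℝ) : ℂ) with hR
  have hRright : ∀ φ : F, (lam : ℂ) • c.j1 (R φ) - c.Hop (R φ) = φ := fun φ =>
    RFright c hres φ
  have hRle : ∀ φ : F, ‖R φ‖ ≤ ‖φ‖ := by
    intro φ
    have h := (hgraph (R φ)).1
    rwa [hRright φ] at h
  have hj1R : ∀ φ : F, d * ‖c.j1 (R φ)‖ ≤ ‖φ‖ := by
    intro φ
    have h := (hgraph (R φ)).2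
    rw [hRright φ] at h
    exact h
  have hj1R' : ∀ φ : F, ‖c.j1 (R φ)‖ ≤ d⁻¹ * ‖φ‖ := by
    intro φ
    rw [inv_mul_eq_div]
    exact (le_div_iff₀' hd0).mpr (hj1R φ)
  have hnormH1 : ∀ ψ : H1, ‖c.j1 ψ‖ ≤ ‖ψ‖ ∧ ‖c.Hop ψ‖ ≤ ‖ψ‖ := by
    intro ψ
    have h := c.norm1_sq ψ
    constructor <;>
      nlinarith [norm_nonneg (c.j1 ψ), norm_nonneg (c.Hop ψ), norm_nonneg ψ]
  -- S as a continuous linear map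
  have hSb : ∀ ψ : H1, ‖S ψ‖ ≤ (a + max b 0) * ‖ψ‖ := by
    intro ψ
    have h := hsmall ψ
    have h1 := (hnormH1 ψ).1
    have h2 := (hnormH1 ψ).2
    have h3 : b * ‖c.j1 ψ‖ ≤ max b 0 * ‖ψ‖ := by
      have ha' : b * ‖c.j1 ψ‖ ≤ max b 0 * ‖c.j1 ψ‖ :=
        mul_le_mul_of_nonneg_right (le_max_left b 0) (norm_nonneg _)
      have hb' : max b 0 * ‖c.j1 ψ‖ ≤ max b 0 * ‖ψ‖ :=
        mul_le_mul_of_nonneg_left h1 (le_max_right b 0)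
      linarith
    have h4 : a * ‖c.Hop ψ‖ ≤ a * ‖ψ‖ := mul_le_mul_of_nonneg_left h2 ha0
    calc ‖S ψ‖ ≤ a * ‖c.Hop ψ‖ + b * ‖c.j1 ψ‖ := h
      _ ≤ a * ‖ψ‖ + max b 0 * ‖ψ‖ := by linarith
      _ = (a + max b 0) * ‖ψ‖ := by ring
  set Scl : H1 →L[ℂ] F := S.mkContinuous (a + max b 0) hSb with hScl
  have hSclapp : ∀ ψ : H1, Scl ψ = S ψ := fun ψ => rfl
  set K : F →L[ℂ] F := Scl.comp R with hKdef
  have hκ0 : (0 : ℝ) ≤ a + max b 0 * d⁻¹ :=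
    add_nonneg ha0 (mul_nonneg (le_max_right b 0) (inv_nonneg.mpr hd0.le))
  have hκ1 : a + max b 0 * d⁻¹ < 1 := by
    rcases le_or_gt b 0 with hb | hb
    · rw [max_eq_right hb]
      simpa using ha1
    · rw [max_eq_left hb.le]
      have h1 : b < d * (1 - a) := (div_lt_iff₀ (by linarith : (0 : ℝ) < 1 - a)).mp hd3
      have h2 : b / d < 1 - a := (div_lt_iff₀ hd0).mpr (by linarith)
      rw [div_eq_mul_inv] at h2
      linarith
  have hKb : ∀ φ : F, ‖K φ‖ ≤ (a + max b 0 * d⁻¹) * ‖φ‖ := by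
    intro φ
    have hH : ‖c.Hop (R φ)‖ ≤ ‖φ‖ := le_trans (hnormH1 (R φ)).2 (hRle φ)
    have hj : ‖c.j1 (R φ)‖ ≤ d⁻¹ * ‖φ‖ := hj1R' φ
    have hbj : b * ‖c.j1 (R φ)‖ ≤ max b 0 * (d⁻¹ * ‖φ‖) := by
      have ha' : b * ‖c.j1 (R φ)‖ ≤ max b 0 * ‖c.j1 (R φ)‖ :=
        mul_le_mul_of_nonneg_right (le_max_left b 0) (norm_nonneg _)
      have hb' : max b 0 * ‖c.j1 (R φ)‖ ≤ max b 0 * (d⁻¹ * ‖φ‖) :=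
        mul_le_mul_of_nonneg_left hj (le_max_right b 0)
      linarith
    have haH : a * ‖c.Hop (R φ)‖ ≤ a * ‖φ‖ := mul_le_mul_of_nonneg_left hH ha0
    calc ‖K φ‖ = ‖S (R φ)‖ := rfl
      _ ≤ a * ‖c.Hop (R φ)‖ + b * ‖c.j1 (R φ)‖ := hsmall (R φ)
      _ ≤ a * ‖φ‖ + max b 0 * (d⁻¹ * ‖φ‖) := by linarith
      _ = (a + max b 0 * d⁻¹) * ‖φ‖ := by ring
  have hKnorm : ‖K‖ < 1 :=
    lt_of_le_of_lt (ContinuousLinearMap.opNorm_le_bound K hκ0 hKb) hκ1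
  -- the operator A ∘ R
  have h1s : (0 : ℝ) < 1 - s := by linarith
  have hdpow : (0 : ℝ) < d ^ (1 - s) := Real.rpow_pos_of_pos hd0 _
  have hCAlt : CA < d ^ (1 - s) := by
    have h := Real.rpow_lt_rpow (Real.rpow_nonneg hCA _) hd2 h1s
    rwa [← Real.rpow_mul hCA, one_div, inv_mul_cancel₀ h1s.ne', Real.rpow_one] at h
  have hg0 : (0 : ℝ) ≤ CA * (d ^ (1 - s))⁻¹ := by positivity
  have hg1 : CA * (d ^ (1 - s))⁻¹ < 1 := by
    have h := (div_lt_one hdpow).mpr hCAlt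
    rwa [div_eq_mul_inv] at h
  set Gm : F →L[ℂ] F := c.A.comp R with hGmdef
  have hGmb : ∀ φ : F, ‖Gm φ‖ ≤ CA * (d ^ (1 - s))⁻¹ * ‖φ‖ := by
    intro φ
    have h1 : ‖Gm φ‖ ≤ CA * c.ns s (R φ) := hA (R φ)
    have h2 : c.ns s (R φ) ≤ ‖R φ‖ ^ s * ‖c.j1 (R φ)‖ ^ (1 - s) :=
      c.ns_interp s hs0.le hs1.le (R φ)
    have h3 : ‖R φ‖ ^ s ≤ ‖φ‖ ^ s := Real.rpow_le_rpow (norm_nonneg _) (hRle φ) hs0.le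
    have h4 : ‖c.j1 (R φ)‖ ^ (1 - s) ≤ (d⁻¹ * ‖φ‖) ^ (1 - s) :=
      Real.rpow_le_rpow (norm_nonneg _) (hj1R' φ) h1s.le
    have h5 : ‖R φ‖ ^ s * ‖c.j1 (R φ)‖ ^ (1 - s) ≤ ‖φ‖ ^ s * ((d⁻¹ * ‖φ‖) ^ (1 - s)) :=
      mul_le_mul h3 h4 (Real.rpow_nonneg (norm_nonneg _) _)
        (Real.rpow_nonneg (norm_nonneg _) _)
    have h7 : ‖φ‖ ^ s * ‖φ‖ ^ (1 - s) = ‖φ‖ := by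
      rw [← Real.rpow_add' (norm_nonneg φ) (by norm_num)]
      norm_num
    have h6 : ‖φ‖ ^ s * ((d⁻¹ * ‖φ‖) ^ (1 - s)) = (d ^ (1 - s))⁻¹ * ‖φ‖ := by
      rw [Real.mul_rpow (inv_nonneg.mpr hd0.le) (norm_nonneg _), Real.inv_rpow hd0.le]
      rw [show ‖φ‖ ^ s * ((d ^ (1 - s))⁻¹ * ‖φ‖ ^ (1 - s))
          = (d ^ (1 - s))⁻¹ * (‖φ‖ ^ s * ‖φ‖ ^ (1 - s)) by ring, h7]
    calc ‖Gm φ‖ ≤ CA * c.ns s (R φ) := h1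
      _ ≤ CA * (‖R φ‖ ^ s * ‖c.j1 (R φ)‖ ^ (1 - s)) := mul_le_mul_of_nonneg_left h2 hCA
      _ ≤ CA * (‖φ‖ ^ s * ((d⁻¹ * ‖φ‖) ^ (1 - s))) := mul_le_mul_of_nonneg_left h5 hCA
      _ = CA * (d ^ (1 - s))⁻¹ * ‖φ‖ := by rw [h6]; ring
  have hGmnorm : ‖Gm‖ < 1 :=
    lt_of_le_of_lt (ContinuousLinearMap.opNorm_le_bound Gm hg0 hGmb) hg1
  have hGeq : c.G ((lam : ℝ) : ℂ) = ContinuousLinearMap.adjoint Gm := by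
    rw [Ctx.G, Complex.conj_ofReal]
  have hGnorm : ‖c.G ((lam : ℝ) : ℂ)‖ < 1 := by
    rw [hGeq]
    calc ‖ContinuousLinearMap.adjoint Gm‖ = ‖Gm‖ :=
          (ContinuousLinearMap.adjoint : (F →L[ℂ] F) ≃ₗᵢ⋆[ℂ] (F →L[ℂ] F)).norm_map Gm
      _ < 1 := hGmnorm
  have hGsteq : c.Gst lam = Gm := by
    rw [Ctx.Gst, hGeq, ContinuousLinearMap.adjoint_adjoint]
  -- invertible operators via Neumann series
  set uG : (F →L[ℂ] F)ˣ := Units.oneSub _ hGnorm with huG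
  set uGst : (F →L[ℂ] F)ˣ := Units.oneSub _ hGmnorm with huGst
  have hKn : ‖-K‖ < 1 := by rwa [norm_neg]
  set uK : (F →L[ℂ] F)ˣ := Units.oneSub _ hKn with huKdef
  have inv_app : ∀ (u : (F →L[ℂ] F)ˣ) (v : F), (↑u⁻¹ : F →L[ℂ] F) ((↑u : F →L[ℂ] F) v) = v := by
    intro u v
    rw [← ContinuousLinearMap.mul_apply, Units.inv_mul, ContinuousLinearMap.one_apply]
  have app_inv : ∀ (u : (F →L[ℂ] F)ˣ) (v : F), (↑u : F →L[ℂ] F) ((↑u⁻¹ : F →L[ℂ] F) v) = v := by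
    intro u v
    rw [← ContinuousLinearMap.mul_apply, Units.mul_inv, ContinuousLinearMap.one_apply]
  have huGval : ∀ v : F, (↑uG : F →L[ℂ] F) v = v - c.G ((lam : ℝ) : ℂ) v := by
    intro v
    rw [huG, Units.val_oneSub]
    simp
  have huGstval : ∀ v : F, (↑uGst : F →L[ℂ] F) v = v - Gm v := by
    intro v
    rw [huGst, Units.val_oneSub]
    simp
  have huKval : ∀ v : F, (↑uK : F →L[ℂ] F) v = v + K v := by
    intro v
    rw [huKdef, Units.val_oneSub, sub_neg_eq_add]
    simp
  -- the candidate inverse Λ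
  set Φ : (F × H1) →L[ℂ] F :=
    (↑uK⁻¹ : F →L[ℂ] F).comp
      (((↑uGst⁻¹ : F →L[ℂ] F).comp (ContinuousLinearMap.fst ℂ F H1)) -
        Scl.comp (ContinuousLinearMap.snd ℂ F H1)) with hΦdef
  set Ψ : (F × H1) →L[ℂ] H1 := ContinuousLinearMap.snd ℂ F H1 + R.comp Φ with hΨdef
  set Λ : (F × H1) →L[ℂ] (F × Hm1) :=
    ((↑uG⁻¹ : F →L[ℂ] F).comp (c.j1.comp Ψ)).prod (c.jm.comp Φ) with hΛdef
  have hΦapp : ∀ (x : F) (y : H1),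
      Φ (x, y) = (↑uK⁻¹ : F →L[ℂ] F) ((↑uGst⁻¹ : F →L[ℂ] F) x - S y) := by
    intro x y
    rw [hΦdef]
    rw [ContinuousLinearMap.comp_apply, ContinuousLinearMap.sub_apply,
      ContinuousLinearMap.comp_apply, ContinuousLinearMap.comp_apply,
      ContinuousLinearMap.coe_fst', ContinuousLinearMap.coe_snd',
      LinearMap.mkContinuous_apply]
  have hΨapp : ∀ (x : F) (y : H1), Ψ (x, y) = y + R (Φ (x, y)) := by
    intro x y
    rw [hΨdef, ContinuousLinearMap.add_apply, ContinuousLinearMap.comp_apply,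
      ContinuousLinearMap.coe_snd']
  have hΛapp : ∀ (x : F) (y : H1),
      Λ (x, y) = ((↑uG⁻¹ : F →L[ℂ] F) (c.j1 (Ψ (x, y))), c.jm (Φ (x, y))) := by
    intro x y
    rw [hΛdef, ContinuousLinearMap.prod_apply, ContinuousLinearMap.comp_apply,
      ContinuousLinearMap.comp_apply, ContinuousLinearMap.comp_apply]
  have hM0 : c.M lam ((lam : ℝ) : ℂ) = 0 := by
    rw [Ctx.M]
    simp
  have hKapp : ∀ φ : F, K φ = S (R φ) := fun φ => rfl
  simp only [Ctx.ZS, Set.mem_setOf_eq]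
  refine ⟨hres, Λ, ?_, ?_⟩
  · -- Λ ∘ (Θ_S + M) = id on the (parametrized) domain
    intro ψ ψ0 φ hcon
    have hTS : c.ThetaMS lam S ((lam : ℝ) : ℂ) ψ ψ0 φ = c.ThetaS lam S ψ ψ0 φ := by
      rw [Ctx.ThetaMS, hM0]
      simp
    rw [hTS]
    have hθ : c.ThetaS lam S ψ ψ0 φ = ((↑uGst : F →L[ℂ] F) (S ψ0 + φ), ψ0 - R φ) := by
      rw [Ctx.ThetaS, hGsteq, huGstval, map_add]
      refine Prod.ext ?_ rfl
      show S ψ0 - Gm (S ψ0) + φ - Gm φ = S ψ0 + φ - (Gm (S ψ0) + Gm φ)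
      abel
    rw [hθ, hΛapp]
    have hΦval : Φ ((↑uGst : F →L[ℂ] F) (S ψ0 + φ), ψ0 - R φ) = φ := by
      rw [hΦapp]
      rw [inv_app]
      have e1 : S ψ0 + φ - S (ψ0 - R φ) = (↑uK : F →L[ℂ] F) φ := by
        rw [map_sub, huKval, hKapp]
        abel
      rw [e1, inv_app]
    have hΨval : Ψ ((↑uGst : F →L[ℂ] F) (S ψ0 + φ), ψ0 - R φ) = ψ0 := by
      rw [hΨapp]
      rw [hΦval]
      abel
    rw [hΦval, hΨval]
    have hj : c.j1 ψ0 = (↑uG : F →L[ℂ] F) ψ := by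
      rw [huGval]
      exact hcon
    rw [hj, inv_app]
  · -- surjectivity
    rintro ⟨χ1, χ2⟩
    refine ⟨(↑uG⁻¹ : F →L[ℂ] F) (c.j1 (Ψ (χ1, χ2))), Ψ (χ1, χ2), Φ (χ1, χ2), ?_, ?_, ?_⟩
    · have h := app_inv uG (c.j1 (Ψ (χ1, χ2)))
      rw [huGval] at h
      exact h.symm
    · rw [hΛapp]
    · have hTS : c.ThetaMS lam S ((lam : ℝ) : ℂ) ((↑uG⁻¹ : F →L[ℂ] F) (c.j1 (Ψ (χ1, χ2))))
          (Ψ (χ1, χ2)) (Φ (χ1, χ2))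
          = c.ThetaS lam S ((↑uG⁻¹ : F →L[ℂ] F) (c.j1 (Ψ (χ1, χ2)))) (Ψ (χ1, χ2))
            (Φ (χ1, χ2)) := by
        rw [Ctx.ThetaMS, hM0]
        simp
      rw [hTS, Ctx.ThetaS, hGsteq]
      have e1 : S (Ψ (χ1, χ2)) + Φ (χ1, χ2) = (↑uGst⁻¹ : F →L[ℂ] F) χ1 := by
        rw [hΨapp]
        rw [map_add, ← hKapp (Φ (χ1, χ2))]
        have h := app_inv uK ((↑uGst⁻¹ : F →L[ℂ] F) χ1 - S χ2)
        rw [huKval] at h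
        rw [hΦapp]
        rw [show S χ2 + K ((↑uK⁻¹ : F →L[ℂ] F) ((↑uGst⁻¹ : F →L[ℂ] F) χ1 - S χ2))
            + (↑uK⁻¹ : F →L[ℂ] F) ((↑uGst⁻¹ : F →L[ℂ] F) χ1 - S χ2)
            = S χ2 + ((↑uK⁻¹ : F →L[ℂ] F) ((↑uGst⁻¹ : F →L[ℂ] F) χ1 - S χ2)
              + K ((↑uK⁻¹ : F →L[ℂ] F) ((↑uGst⁻¹ : F →L[ℂ] F) χ1 - S χ2))) from by abel, h]
        abel
      refine Prod.ext ?_ ?_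
      · show S (Ψ (χ1, χ2)) - Gm (S (Ψ (χ1, χ2))) + Φ (χ1, χ2) - Gm (Φ (χ1, χ2)) = χ1
        have e2 : S (Ψ (χ1, χ2)) - Gm (S (Ψ (χ1, χ2))) + Φ (χ1, χ2) - Gm (Φ (χ1, χ2))
            = (↑uGst : F →L[ℂ] F) (S (Ψ (χ1, χ2)) + Φ (χ1, χ2)) := by
          rw [huGstval, map_add]
          abel
        rw [e2, e1, app_inv]
      · show Ψ (χ1, χ2) - R (Φ (χ1, χ2)) = χ2
        rw [hΨapp]
        abel
end
end

section
/- Let S be H-small with constants a ∈ [0,1), b ∈ ℝ, let A ∈ 𝔅(𝔥_s,𝔉) for some s ∈ (0,1), and let λ < λ_inf be such that 1−G_λ and 1−G_λ* have bounded inverses in 𝔅(𝔉). Define S̃ := (1−G_λ*)^{-1}(A(G − G_λ) + T_S)(1−G_λ)^{-1}. Then S̃ − S extends to a bounded operator on 𝔉; in particular S̃ is H-small with the same constant a: ‖S̃ψ‖ ≤ a‖Hψ‖ + b̃‖ψ‖ for all ψ ∈ dom(H), where b̃ := b + ‖S̃−S‖_{𝔅(𝔉)}. -/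
open scoped InnerProductSpace ComplexConjugate

noncomputable section

local notation "⟪" x ", " y "⟫" => @inner ℂ _ _ x y

variable {F H1 Hm1 : Type*}
  [NormedAddCommGroup F] [InnerProductSpace ℂ F] [CompleteSpace F]
  [NormedAddCommGroup H1] [InnerProductSpace ℂ H1] [CompleteSpace H1]
  [NormedAddCommGroup Hm1] [InnerProductSpace ℂ Hm1] [CompleteSpace Hm1]

section AuxLemmas

variable (c : Ctx F H1 Hm1)

/-- Pointwise resolvent identity. -/
lemma Ctx.aux_resid {z w : ℂ} (hz : z ∈ c.res) (hw : w ∈ c.res) (χ : F) :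
    c.RF z χ - c.RF w χ = (w - z) • c.RF z (c.j1 (c.RF w χ)) := by
  have h1 : w • c.j1 (c.RF w χ) - c.Hop (c.RF w χ) = χ := by
    have := congrArg (fun T => T χ) (c.RF_inv_right w hw)
    simpa using this
  have h2 : c.RF z (z • c.j1 (c.RF w χ) - c.Hop (c.RF w χ)) = c.RF w χ := by
    have := congrArg (fun T => T (c.RF w χ)) (c.RF_inv_left z hz)
    simpa using this
  have h3 : c.RF z χ = c.RF z (w • c.j1 (c.RF w χ) - c.Hop (c.RF w χ)) := by rw [h1]
  have h4 : (w • c.j1 (c.RF w χ) - c.Hop (c.RF w χ))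
      - (z • c.j1 (c.RF w χ) - c.Hop (c.RF w χ)) = (w - z) • c.j1 (c.RF w χ) := by
    rw [sub_smul]; abel
  calc c.RF z χ - c.RF w χ
      = c.RF z (w • c.j1 (c.RF w χ) - c.Hop (c.RF w χ))
        - c.RF z (z • c.j1 (c.RF w χ) - c.Hop (c.RF w χ)) := by rw [← h3, h2]
    _ = c.RF z ((w • c.j1 (c.RF w χ) - c.Hop (c.RF w χ))
        - (z • c.j1 (c.RF w χ) - c.Hop (c.RF w χ))) := (map_sub _ _ _).symm
    _ = (w - z) • c.RF z (c.j1 (c.RF w χ)) := by rw [h4, map_smul]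

/-- `j1 ∘ RF t` is self-adjoint for real `t`. -/
lemma Ctx.aux_sa (t : ℝ) (ht : (t : ℂ) ∈ c.res) (x y : F) :
    ⟪c.j1 (c.RF (t : ℂ) x), y⟫ = ⟪x, c.j1 (c.RF (t : ℂ) y)⟫ := by
  have hx : (t : ℂ) • c.j1 (c.RF (t : ℂ) x) - c.Hop (c.RF (t : ℂ) x) = x := by
    have := congrArg (fun T => T x) (c.RF_inv_right (t : ℂ) ht); simpa using this
  have hy : (t : ℂ) • c.j1 (c.RF (t : ℂ) y) - c.Hop (c.RF (t : ℂ) y) = y := by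
    have := congrArg (fun T => T y) (c.RF_inv_right (t : ℂ) ht); simpa using this
  calc ⟪c.j1 (c.RF (t : ℂ) x), y⟫
      = ⟪c.j1 (c.RF (t : ℂ) x), (t : ℂ) • c.j1 (c.RF (t : ℂ) y) - c.Hop (c.RF (t : ℂ) y)⟫ := by
        rw [hy]
    _ = (t : ℂ) * ⟪c.j1 (c.RF (t : ℂ) x), c.j1 (c.RF (t : ℂ) y)⟫
        - ⟪c.j1 (c.RF (t : ℂ) x), c.Hop (c.RF (t : ℂ) y)⟫ := by
        rw [inner_sub_right, inner_smul_right]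
    _ = (t : ℂ) * ⟪c.j1 (c.RF (t : ℂ) x), c.j1 (c.RF (t : ℂ) y)⟫
        - ⟪c.Hop (c.RF (t : ℂ) x), c.j1 (c.RF (t : ℂ) y)⟫ := by
        rw [c.Hsymm]
    _ = ⟪(t : ℂ) • c.j1 (c.RF (t : ℂ) x) - c.Hop (c.RF (t : ℂ) x), c.j1 (c.RF (t : ℂ) y)⟫ := by
        rw [inner_sub_left, inner_smul_left, Complex.conj_ofReal]
    _ = ⟪x, c.j1 (c.RF (t : ℂ) y)⟫ := by rw [hx]

/-- `⟪G_t x, y⟫ = ⟪x, A (R_t y)⟫` for real `t`. -/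
lemma Ctx.aux_g_inner (t : ℝ) (x y : F) :
    ⟪c.G (t : ℂ) x, y⟫ = ⟪x, c.A (c.RF (t : ℂ) y)⟫ := by
  simp [Ctx.G, Complex.conj_ofReal, ContinuousLinearMap.adjoint_inner_left]

/-- `G_t* = A R_t` for real `t`. -/
lemma Ctx.aux_gst_apply (t : ℝ) (x : F) : c.Gst t x = c.A (c.RF (t : ℂ) x) := by
  simp [Ctx.Gst, Ctx.G, Complex.conj_ofReal, ContinuousLinearMap.adjoint_adjoint]

/-- Pointwise difference of `G` at two real points. -/
lemma Ctx.aux_gdiff (t0 t : ℝ) (h0 : ((t0 : ℝ) : ℂ) ∈ c.res) (h : ((t : ℝ) : ℂ) ∈ c.res)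
    (χ : F) :
    c.G (t0 : ℂ) χ - c.G (t : ℂ) χ
      = ((t : ℂ) - (t0 : ℂ)) • c.j1 (c.RF (t : ℂ) (c.G (t0 : ℂ) χ)) := by
  apply ext_inner_right ℂ
  intro y
  rw [inner_sub_left, c.aux_g_inner t0, c.aux_g_inner t, inner_smul_left]
  have hconj : (starRingEnd ℂ) ((t : ℂ) - (t0 : ℂ)) = (t : ℂ) - (t0 : ℂ) := by
    rw [map_sub, Complex.conj_ofReal, Complex.conj_ofReal]
  rw [hconj, c.aux_sa t h, c.aux_g_inner t0]
  rw [← inner_sub_right, ← map_sub, c.aux_resid h0 h y, map_smul, inner_smul_right]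

end AuxLemmas

set_option maxHeartbeats 2000000 in
/-- Let `S` be `H`-small with constants `a ∈ [0,1)`, `b`, let
`A ∈ 𝔅(𝔥_s,𝔉)` for some `s ∈ (0,1)`, and let `λ < λ_inf` be such that `1-G_λ` and
`1-G_λ*` have bounded inverses `W`, `Wst` in `𝔅(𝔉)`.  Define
`S̃ := (1-G_λ*)⁻¹(A(G-G_λ) + T_S)(1-G_λ)⁻¹`.  Then `S̃ - S` extends to a bounded operator
on `𝔉`; in particular `S̃` is `H`-small with the same constant `a`:
`‖S̃ψ‖ ≤ a‖Hψ‖ + b̃‖ψ‖` with `b̃ := b + ‖S̃-S‖`. -/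
theorem statement13 (c : Ctx F H1 Hm1)
    (lam0 : ℝ) (hlam0 : lam0 < c.lamInf)
    (s : ℝ) (hs : s ∈ Set.Ioo (0 : ℝ) 1)
    (CA : ℝ) (hCA : 0 ≤ CA) (hA : ∀ ψ : H1, ‖c.A ψ‖ ≤ CA * c.ns s ψ)
    (S : H1 →ₗ[ℂ] F) (hS : c.IsSymmOp S)
    (a b : ℝ) (ha0 : 0 ≤ a) (ha1 : a < 1) (hsmall : c.HSmall S a b)
    (lam : ℝ) (hlam : lam < c.lamInf)
    (W Wst : F →L[ℂ] F)
    (hW1 : W.comp ((1 : F →L[ℂ] F) - c.G (lam : ℂ)) = 1)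
    (hW2 : ((1 : F →L[ℂ] F) - c.G (lam : ℂ)).comp W = 1)
    (hWst1 : Wst.comp ((1 : F →L[ℂ] F) - c.Gst lam) = 1)
    (hWst2 : ((1 : F →L[ℂ] F) - c.Gst lam).comp Wst = 1) :
    ∃ C : ℝ, 0 ≤ C ∧
      ∀ (ψ : H1) (ξ χ0 : H1),
        c.j1 ξ = c.G (lam0 : ℂ) (W (c.j1 ψ)) - c.G (lam : ℂ) (W (c.j1 ψ)) →
        c.j1 χ0 = W (c.j1 ψ) - c.G (lam0 : ℂ) (W (c.j1 ψ)) →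
        ‖Wst (c.A ξ + (S χ0 - c.Gst lam0 (S χ0))) - S ψ‖ ≤ C * ‖c.j1 ψ‖ ∧
        ‖Wst (c.A ξ + (S χ0 - c.Gst lam0 (S χ0)))‖ ≤
          a * ‖c.Hop ψ‖ + (b + C) * ‖c.j1 ψ‖ := by
  have hres0 : ((lam0 : ℝ) : ℂ) ∈ c.res := c.res_below lam0 hlam0
  have hres : ((lam : ℝ) : ℂ) ∈ c.res := c.res_below lam hlam
  -- `H`-graph-norm bounds
  have hHle : ∀ φ : H1, ‖c.Hop φ‖ ≤ ‖φ‖ := by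
    intro φ
    have h := c.norm1_sq φ
    nlinarith [norm_nonneg (c.Hop φ), norm_nonneg φ, sq_nonneg ‖c.j1 φ‖]
  have hjle : ∀ φ : H1, ‖c.j1 φ‖ ≤ ‖φ‖ := by
    intro φ
    have h := c.norm1_sq φ
    nlinarith [norm_nonneg (c.j1 φ), norm_nonneg φ, sq_nonneg ‖c.Hop φ‖]
  have hKS0 : (0 : ℝ) ≤ a + |b| := add_nonneg ha0 (abs_nonneg b)
  have hSle : ∀ φ : H1, ‖S φ‖ ≤ (a + |b|) * ‖φ‖ := by
    intro φ
    have h1 := hsmall φ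
    have h2 := mul_le_mul_of_nonneg_left (hHle φ) ha0
    have h3 : b * ‖c.j1 φ‖ ≤ |b| * ‖φ‖ := by
      calc b * ‖c.j1 φ‖ ≤ |b| * ‖c.j1 φ‖ :=
            mul_le_mul_of_nonneg_right (le_abs_self b) (norm_nonneg _)
        _ ≤ |b| * ‖φ‖ := mul_le_mul_of_nonneg_left (hjle φ) (abs_nonneg b)
    calc ‖S φ‖ ≤ a * ‖c.Hop φ‖ + b * ‖c.j1 φ‖ := h1
      _ ≤ a * ‖φ‖ + |b| * ‖φ‖ := by linarith
      _ = (a + |b|) * ‖φ‖ := by ring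
  refine ⟨‖Wst‖ * ((‖c.A‖ + (a + |b|) + ‖c.Gst lam0‖ * (a + |b|)) *
      (‖((lam : ℂ) - (lam0 : ℂ))‖ * (‖c.RF (lam : ℂ)‖ * (‖c.G (lam0 : ℂ)‖ * ‖W‖))) +
      ‖((lam0 : ℂ) - (lam : ℂ))‖ * (‖c.A‖ * (‖c.RF (lam : ℂ)‖ *
        ((a + |b|) * ‖c.RF (lam0 : ℂ)‖)))), ?_, ?_⟩
  · apply mul_nonneg (norm_nonneg _)
    apply add_nonneg
    · apply mul_nonneg
      · exact add_nonneg (add_nonneg (norm_nonneg _) hKS0)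
          (mul_nonneg (norm_nonneg _) hKS0)
      · exact mul_nonneg (norm_nonneg _) (mul_nonneg (norm_nonneg _)
          (mul_nonneg (norm_nonneg _) (norm_nonneg _)))
    · exact mul_nonneg (norm_nonneg _) (mul_nonneg (norm_nonneg _)
        (mul_nonneg (norm_nonneg _) (mul_nonneg hKS0 (norm_nonneg _))))
  intro ψ ξ χ0 hξ hχ0
  -- identify ξ
  have hξeq : ξ = ((lam : ℂ) - (lam0 : ℂ)) • c.RF (lam : ℂ) (c.G (lam0 : ℂ) (W (c.j1 ψ))) := by
    apply c.j1_inj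
    rw [hξ, c.aux_gdiff lam0 lam hres0 hres (W (c.j1 ψ)), map_smul]
  have hξnorm : ‖ξ‖ ≤ (‖((lam : ℂ) - (lam0 : ℂ))‖ *
      (‖c.RF (lam : ℂ)‖ * (‖c.G (lam0 : ℂ)‖ * ‖W‖))) * ‖c.j1 ψ‖ := by
    have hb1 : ‖W (c.j1 ψ)‖ ≤ ‖W‖ * ‖c.j1 ψ‖ := W.le_opNorm _
    have hb2 := (c.G (lam0 : ℂ)).le_opNorm_of_le hb1
    have hb3 := (c.RF (lam : ℂ)).le_opNorm_of_le hb2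
    calc ‖ξ‖ = ‖((lam : ℂ) - (lam0 : ℂ))‖ *
        ‖c.RF (lam : ℂ) (c.G (lam0 : ℂ) (W (c.j1 ψ)))‖ := by rw [hξeq, norm_smul]
      _ ≤ ‖((lam : ℂ) - (lam0 : ℂ))‖ *
          (‖c.RF (lam : ℂ)‖ * (‖c.G (lam0 : ℂ)‖ * (‖W‖ * ‖c.j1 ψ‖))) :=
        mul_le_mul_of_nonneg_left hb3 (norm_nonneg _)
      _ = (‖((lam : ℂ) - (lam0 : ℂ))‖ *
          (‖c.RF (lam : ℂ)‖ * (‖c.G (lam0 : ℂ)‖ * ‖W‖))) * ‖c.j1 ψ‖ := by ring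
  -- identify χ0
  have hW2' : W (c.j1 ψ) - c.G (lam : ℂ) (W (c.j1 ψ)) = c.j1 ψ := by
    have := congrArg (fun T => T (c.j1 ψ)) hW2
    simpa using this
  have hχ0eq : χ0 = ψ - ξ := by
    apply c.j1_inj
    rw [map_sub, hχ0, hξ, ← sub_eq_zero]
    calc W (c.j1 ψ) - c.G (lam0 : ℂ) (W (c.j1 ψ))
          - (c.j1 ψ - (c.G (lam0 : ℂ) (W (c.j1 ψ)) - c.G (lam : ℂ) (W (c.j1 ψ))))
        = (W (c.j1 ψ) - c.G (lam : ℂ) (W (c.j1 ψ))) - c.j1 ψ := by abel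
      _ = 0 := by rw [hW2', sub_self]
  -- rewrite the difference
  have hWst1' : Wst (S ψ - c.Gst lam (S ψ)) = S ψ := by
    have := congrArg (fun T => T (S ψ)) hWst1
    simpa using this
  have hX : Wst (c.A ξ + (S χ0 - c.Gst lam0 (S χ0))) - S ψ
      = Wst (c.A ξ - S ξ + c.Gst lam0 (S ξ)
          + (c.Gst lam (S ψ) - c.Gst lam0 (S ψ))) := by
    conv_lhs => rw [← hWst1']
    rw [← map_sub]
    congr 1
    rw [hχ0eq, map_sub S, map_sub (c.Gst lam0)]
    abel
  -- term 4
  have ht4 : c.Gst lam (S ψ) - c.Gst lam0 (S ψ)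
      = ((lam0 : ℂ) - (lam : ℂ)) • c.A (c.RF (lam : ℂ) (c.j1 (c.RF (lam0 : ℂ) (S ψ)))) := by
    rw [c.aux_gst_apply, c.aux_gst_apply, ← map_sub, c.aux_resid hres hres0 (S ψ), map_smul]
  -- bound on v := j1 (RF lam0 (S ψ))
  have hv : ‖c.j1 (c.RF (lam0 : ℂ) (S ψ))‖ ≤ ((a + |b|) * ‖c.RF (lam0 : ℂ)‖) * ‖c.j1 ψ‖ := by
    by_cases hz : ‖c.j1 (c.RF (lam0 : ℂ) (S ψ))‖ = 0
    · rw [hz]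
      exact mul_nonneg (mul_nonneg hKS0 (norm_nonneg _)) (norm_nonneg _)
    · have hvpos : 0 < ‖c.j1 (c.RF (lam0 : ℂ) (S ψ))‖ :=
        lt_of_le_of_ne (norm_nonneg _) (Ne.symm hz)
      have h1 : ⟪c.j1 (c.RF (lam0 : ℂ) (S ψ)), c.j1 (c.RF (lam0 : ℂ) (S ψ))⟫
          = ⟪c.j1 ψ, S (c.RF (lam0 : ℂ) (c.j1 (c.RF (lam0 : ℂ) (S ψ))))⟫ := by
        rw [c.aux_sa lam0 hres0 (S ψ) (c.j1 (c.RF (lam0 : ℂ) (S ψ)))]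
        exact hS ψ (c.RF (lam0 : ℂ) (c.j1 (c.RF (lam0 : ℂ) (S ψ))))
      have h2 : ‖c.j1 (c.RF (lam0 : ℂ) (S ψ))‖ * ‖c.j1 (c.RF (lam0 : ℂ) (S ψ))‖
          ≤ ‖c.j1 ψ‖ * ((a + |b|) * (‖c.RF (lam0 : ℂ)‖ * ‖c.j1 (c.RF (lam0 : ℂ) (S ψ))‖)) := by
        have e1 : ‖c.j1 (c.RF (lam0 : ℂ) (S ψ))‖ * ‖c.j1 (c.RF (lam0 : ℂ) (S ψ))‖
            = RCLike.re ⟪c.j1 (c.RF (lam0 : ℂ) (S ψ)), c.j1 (c.RF (lam0 : ℂ) (S ψ))⟫ :=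
          (inner_self_eq_norm_mul_norm (𝕜 := ℂ) _).symm
        have e2 : RCLike.re ⟪c.j1 ψ, S (c.RF (lam0 : ℂ) (c.j1 (c.RF (lam0 : ℂ) (S ψ))))⟫
            ≤ ‖(⟪c.j1 ψ, S (c.RF (lam0 : ℂ) (c.j1 (c.RF (lam0 : ℂ) (S ψ))))⟫ : ℂ)‖ :=
          RCLike.re_le_norm _
        have e3 : ‖(⟪c.j1 ψ, S (c.RF (lam0 : ℂ) (c.j1 (c.RF (lam0 : ℂ) (S ψ))))⟫ : ℂ)‖
            ≤ ‖c.j1 ψ‖ * ‖S (c.RF (lam0 : ℂ) (c.j1 (c.RF (lam0 : ℂ) (S ψ))))‖ :=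
          norm_inner_le_norm _ _
        have e4 : ‖S (c.RF (lam0 : ℂ) (c.j1 (c.RF (lam0 : ℂ) (S ψ))))‖
            ≤ (a + |b|) * (‖c.RF (lam0 : ℂ)‖ * ‖c.j1 (c.RF (lam0 : ℂ) (S ψ))‖) :=
          (hSle _).trans (mul_le_mul_of_nonneg_left ((c.RF (lam0 : ℂ)).le_opNorm _) hKS0)
        rw [e1, h1]
        calc RCLike.re ⟪c.j1 ψ, S (c.RF (lam0 : ℂ) (c.j1 (c.RF (lam0 : ℂ) (S ψ))))⟫
            ≤ ‖c.j1 ψ‖ * ‖S (c.RF (lam0 : ℂ) (c.j1 (c.RF (lam0 : ℂ) (S ψ))))‖ := e2.trans e3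
          _ ≤ ‖c.j1 ψ‖ * ((a + |b|) * (‖c.RF (lam0 : ℂ)‖ * ‖c.j1 (c.RF (lam0 : ℂ) (S ψ))‖)) :=
            mul_le_mul_of_nonneg_left e4 (norm_nonneg _)
      nlinarith [h2, hvpos]
  -- component bounds
  have htA : ‖c.A ξ‖ ≤ ‖c.A‖ * ((‖((lam : ℂ) - (lam0 : ℂ))‖ *
      (‖c.RF (lam : ℂ)‖ * (‖c.G (lam0 : ℂ)‖ * ‖W‖))) * ‖c.j1 ψ‖) :=
    (c.A).le_opNorm_of_le hξnorm
  have htS : ‖S ξ‖ ≤ (a + |b|) * ((‖((lam : ℂ) - (lam0 : ℂ))‖ *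
      (‖c.RF (lam : ℂ)‖ * (‖c.G (lam0 : ℂ)‖ * ‖W‖))) * ‖c.j1 ψ‖) :=
    (hSle ξ).trans (mul_le_mul_of_nonneg_left hξnorm hKS0)
  have htG : ‖c.Gst lam0 (S ξ)‖ ≤ ‖c.Gst lam0‖ * ((a + |b|) * ((‖((lam : ℂ) - (lam0 : ℂ))‖ *
      (‖c.RF (lam : ℂ)‖ * (‖c.G (lam0 : ℂ)‖ * ‖W‖))) * ‖c.j1 ψ‖)) :=
    (c.Gst lam0).le_opNorm_of_le htS
  have ht4n : ‖c.Gst lam (S ψ) - c.Gst lam0 (S ψ)‖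
      ≤ ‖((lam0 : ℂ) - (lam : ℂ))‖ * (‖c.A‖ * (‖c.RF (lam : ℂ)‖ *
        (((a + |b|) * ‖c.RF (lam0 : ℂ)‖) * ‖c.j1 ψ‖))) := by
    rw [ht4, norm_smul]
    exact mul_le_mul_of_nonneg_left
      ((c.A).le_opNorm_of_le ((c.RF (lam : ℂ)).le_opNorm_of_le hv)) (norm_nonneg _)
  have hZ : ‖c.A ξ - S ξ + c.Gst lam0 (S ξ) + (c.Gst lam (S ψ) - c.Gst lam0 (S ψ))‖
      ≤ ((‖c.A‖ + (a + |b|) + ‖c.Gst lam0‖ * (a + |b|)) *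
      (‖((lam : ℂ) - (lam0 : ℂ))‖ * (‖c.RF (lam : ℂ)‖ * (‖c.G (lam0 : ℂ)‖ * ‖W‖))) +
      ‖((lam0 : ℂ) - (lam : ℂ))‖ * (‖c.A‖ * (‖c.RF (lam : ℂ)‖ *
        ((a + |b|) * ‖c.RF (lam0 : ℂ)‖)))) * ‖c.j1 ψ‖ := by
    have h1 : ‖c.A ξ - S ξ + c.Gst lam0 (S ξ) + (c.Gst lam (S ψ) - c.Gst lam0 (S ψ))‖
        ≤ ‖c.A ξ‖ + ‖S ξ‖ + ‖c.Gst lam0 (S ξ)‖ + ‖c.Gst lam (S ψ) - c.Gst lam0 (S ψ)‖ := by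
      calc ‖c.A ξ - S ξ + c.Gst lam0 (S ξ) + (c.Gst lam (S ψ) - c.Gst lam0 (S ψ))‖
          ≤ ‖c.A ξ - S ξ + c.Gst lam0 (S ξ)‖ + ‖c.Gst lam (S ψ) - c.Gst lam0 (S ψ)‖ :=
            norm_add_le _ _
        _ ≤ (‖c.A ξ - S ξ‖ + ‖c.Gst lam0 (S ξ)‖) + ‖c.Gst lam (S ψ) - c.Gst lam0 (S ψ)‖ := by
            have := norm_add_le (c.A ξ - S ξ) (c.Gst lam0 (S ξ)); linarith
        _ ≤ ‖c.A ξ‖ + ‖S ξ‖ + ‖c.Gst lam0 (S ξ)‖ + ‖c.Gst lam (S ψ) - c.Gst lam0 (S ψ)‖ := by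
            have := norm_sub_le (c.A ξ) (S ξ); linarith
    nlinarith [h1, htA, htS, htG, ht4n]
  have hfirst : ‖Wst (c.A ξ + (S χ0 - c.Gst lam0 (S χ0))) - S ψ‖
      ≤ ‖Wst‖ * ((‖c.A‖ + (a + |b|) + ‖c.Gst lam0‖ * (a + |b|)) *
        (‖((lam : ℂ) - (lam0 : ℂ))‖ * (‖c.RF (lam : ℂ)‖ * (‖c.G (lam0 : ℂ)‖ * ‖W‖))) +
        ‖((lam0 : ℂ) - (lam : ℂ))‖ * (‖c.A‖ * (‖c.RF (lam : ℂ)‖ *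
          ((a + |b|) * ‖c.RF (lam0 : ℂ)‖)))) * ‖c.j1 ψ‖ := by
    rw [hX]
    calc ‖Wst (c.A ξ - S ξ + c.Gst lam0 (S ξ) + (c.Gst lam (S ψ) - c.Gst lam0 (S ψ)))‖
        ≤ ‖Wst‖ * (((‖c.A‖ + (a + |b|) + ‖c.Gst lam0‖ * (a + |b|)) *
          (‖((lam : ℂ) - (lam0 : ℂ))‖ * (‖c.RF (lam : ℂ)‖ * (‖c.G (lam0 : ℂ)‖ * ‖W‖))) +
          ‖((lam0 : ℂ) - (lam : ℂ))‖ * (‖c.A‖ * (‖c.RF (lam : ℂ)‖ *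
            ((a + |b|) * ‖c.RF (lam0 : ℂ)‖)))) * ‖c.j1 ψ‖) :=
          Wst.le_opNorm_of_le hZ
      _ = ‖Wst‖ * ((‖c.A‖ + (a + |b|) + ‖c.Gst lam0‖ * (a + |b|)) *
          (‖((lam : ℂ) - (lam0 : ℂ))‖ * (‖c.RF (lam : ℂ)‖ * (‖c.G (lam0 : ℂ)‖ * ‖W‖))) +
          ‖((lam0 : ℂ) - (lam : ℂ))‖ * (‖c.A‖ * (‖c.RF (lam : ℂ)‖ *
            ((a + |b|) * ‖c.RF (lam0 : ℂ)‖)))) * ‖c.j1 ψ‖ := (mul_assoc _ _ _).symm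
  refine ⟨hfirst, ?_⟩
  have he : (Wst (c.A ξ + (S χ0 - c.Gst lam0 (S χ0))) - S ψ) + S ψ
      = Wst (c.A ξ + (S χ0 - c.Gst lam0 (S χ0))) := by abel
  have hn := norm_add_le (Wst (c.A ξ + (S χ0 - c.Gst lam0 (S χ0))) - S ψ) (S ψ)
  rw [he] at hn
  have hs' := hsmall ψ
  nlinarith [hn, hfirst, hs']
end
end

section
/- For every ψ ∈ 𝔉 one has (−H̄+λ∘)(1−G)ψ = (−H̄ − A* + λ∘)ψ in 𝔥₋₁; consequently the operator (H̄ + A*) restricted to 𝔇 takes values in 𝔉, and for ψ ∈ 𝔇 one has A_Sψ = (A − (1−G*)S)ψ∘ ∈ 𝔉, where ψ∘ := ψ − Gψ; hence H_S = H̄ + A* + A_S maps 𝔇 into 𝔉. -/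
open scoped InnerProductSpace ComplexConjugate

noncomputable section

local notation "⟪" x ", " y "⟫" => @inner ℂ _ _ x y

variable {F H1 Hm1 : Type*}
  [NormedAddCommGroup F] [InnerProductSpace ℂ F] [CompleteSpace F]
  [NormedAddCommGroup H1] [InnerProductSpace ℂ H1] [CompleteSpace H1]
  [NormedAddCommGroup Hm1] [InnerProductSpace ℂ Hm1] [CompleteSpace Hm1]

lemma aux_pair_Hbar (c : Ctx F H1 Hm1) (χ : F) (φ : H1) :
    c.pair (c.Hbar χ) φ = ⟪χ, c.Hop φ⟫ := by
  refine c.j1_dense.induction_on χ ?_ ?_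
  · exact isClosed_eq ((c.pair_cont φ).comp c.Hbar.continuous)
      (Continuous.inner continuous_id continuous_const)
  · intro η
    have h : c.Hbar (c.j1 η) = c.jm (c.Hop η) := by
      have := congrArg (fun T : H1 →L[ℂ] Hm1 => T η) c.Hbar_ext
      simpa using this
    rw [h, c.pair_jm, ← c.Hsymm]

lemma aux_pair_neg (c : Ctx F H1 Hm1) (y : Hm1) (φ : H1) :
    c.pair (-y) φ = - c.pair y φ := by
  have := c.pair_smul (-1) y φ
  simpa using this

lemma aux_pair_sub (c : Ctx F H1 Hm1) (x y : Hm1) (φ : H1) :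
    c.pair (x - y) φ = c.pair x φ - c.pair y φ := by
  rw [sub_eq_add_neg, c.pair_add, aux_pair_neg, sub_eq_add_neg]

lemma aux_key (c : Ctx F H1 Hm1) (lam : ℝ) (hres : (lam : ℂ) ∈ c.res) (ψ : F) :
    ((lam : ℂ) • c.jm - c.Hbar) (c.G (lam : ℂ) ψ) = c.Astar ψ := by
  rw [← sub_eq_zero]
  apply c.pair_nondeg
  intro φ
  rw [aux_pair_sub]
  have hG : c.G (lam : ℂ) = ContinuousLinearMap.adjoint (c.A.comp (c.RF (lam : ℂ))) := by
    unfold Ctx.G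
    rw [Complex.conj_ofReal]
  have h1 : c.pair (((lam : ℂ) • c.jm - c.Hbar) (c.G (lam : ℂ) ψ)) φ
      = ⟪c.G (lam : ℂ) ψ, ((lam : ℂ) • c.j1 - c.Hop) φ⟫ := by
    rw [ContinuousLinearMap.sub_apply, ContinuousLinearMap.smul_apply,
      aux_pair_sub, c.pair_smul, c.pair_jm, aux_pair_Hbar,
      ContinuousLinearMap.sub_apply, ContinuousLinearMap.smul_apply,
      inner_sub_right, inner_smul_right, Complex.conj_ofReal]
  rw [h1, hG, ContinuousLinearMap.adjoint_inner_left]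
  have h2 : c.RF (lam : ℂ) (((lam : ℂ) • c.j1 - c.Hop) φ) = φ := by
    have := congrArg (fun T : H1 →L[ℂ] H1 => T φ) (c.RF_inv_left (lam : ℂ) hres)
    simpa using this
  rw [ContinuousLinearMap.comp_apply, h2, c.Astar_spec, sub_self]

/-- For every `ψ ∈ 𝔉` one has `(-H̄+λ∘)(1-G)ψ = (-H̄-A*+λ∘)ψ` in `𝔥₋₁`;
consequently `(H̄+A*)|𝔇` is `𝔉`-valued, and for `ψ ∈ 𝔇` one has
`A_Sψ = (A - (1-G*)S)ψ∘ ∈ 𝔉` where `ψ∘ := ψ - Gψ`; hence `H_S = H̄ + A* + A_S` maps `𝔇`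
into `𝔉`. -/
theorem statement15 (c : Ctx F H1 Hm1)
    (lam : ℝ) (hlam : lam < c.lamInf)
    (S : H1 →ₗ[ℂ] F) (hS : c.IsSymmOp S) :
    (∀ ψ : F, ((lam : ℂ) • c.jm - c.Hbar) (ψ - c.G (lam : ℂ) ψ) =
      (lam : ℂ) • c.jm ψ - c.Hbar ψ - c.Astar ψ) ∧
    (∀ ψ ∈ c.Dom lam, ∃ χ : F, c.jm χ = c.Hbar ψ + c.Astar ψ) ∧
    (∀ (ψ : F) (ψ0 : H1), c.j1 ψ0 = ψ - c.G (lam : ℂ) ψ →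
      c.A ψ0 - (S ψ0 - c.Gst lam (S ψ0)) = (c.A ψ0 - S ψ0) + c.Gst lam (S ψ0) ∧
      ∃ χ : F, c.jm χ =
        c.Hbar ψ + c.Astar ψ + c.jm (c.A ψ0 - (S ψ0 - c.Gst lam (S ψ0)))) := by
  have hres : (lam : ℂ) ∈ c.res := c.res_below lam hlam
  have key := aux_key c lam hres
  have part1 : ∀ ψ : F, ((lam : ℂ) • c.jm - c.Hbar) (ψ - c.G (lam : ℂ) ψ) =
      (lam : ℂ) • c.jm ψ - c.Hbar ψ - c.Astar ψ := by
    intro ψ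
    rw [map_sub, key ψ]
    simp [ContinuousLinearMap.sub_apply, ContinuousLinearMap.smul_apply]
  have part2 : ∀ (ψ : F) (φ : H1), ψ - c.G (lam : ℂ) ψ = c.j1 φ →
      c.jm ((lam : ℂ) • ψ - (lam : ℂ) • c.j1 φ + c.Hop φ) = c.Hbar ψ + c.Astar ψ := by
    intro ψ φ hφ
    have h1 := part1 ψ
    rw [hφ] at h1
    have h2 : c.Hbar (c.j1 φ) = c.jm (c.Hop φ) := by
      have := congrArg (fun T : H1 →L[ℂ] Hm1 => T φ) c.Hbar_ext
      simpa using this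
    have h3 : ((lam : ℂ) • c.jm - c.Hbar) (c.j1 φ)
        = (lam : ℂ) • c.jm (c.j1 φ) - c.jm (c.Hop φ) := by
      rw [ContinuousLinearMap.sub_apply, ContinuousLinearMap.smul_apply, h2]
    rw [h3] at h1
    have h4 : c.Hbar ψ + c.Astar ψ
        = (lam : ℂ) • c.jm ψ - ((lam : ℂ) • c.jm (c.j1 φ) - c.jm (c.Hop φ)) := by
      rw [h1]; abel
    rw [map_add, map_sub, map_smul, map_smul, h4]
    abel
  refine ⟨part1, ?_, ?_⟩
  · rintro ψ ⟨φ, hφ⟩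
    exact ⟨_, part2 ψ φ hφ⟩
  · intro ψ ψ0 h0
    refine ⟨by abel, ?_⟩
    refine ⟨(lam : ℂ) • ψ - (lam : ℂ) • c.j1 ψ0 + c.Hop ψ0
      + (c.A ψ0 - (S ψ0 - c.Gst lam (S ψ0))), ?_⟩
    rw [map_add, part2 ψ ψ0 h0.symm]
end
end
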